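/- arXiv:2102.11306 — 3 statements merged into one kernel-verified Lean document; each statement's English description precedes it below -/
import Mathlib

section
/- Let n ≥ 2, let u = w_0⋯w_{n−1} ∈ 𝒱 and w = u·w_n ∈ 𝒱 be generalized snake words, and for 0 ≤ k ≤ n−1 let N_k be the number of sets S ∈ 𝒢(u) with k ∈ S and k+1 ∉ S (the condition k+1 ∉ S being vacuous when k = n−1). Then |𝒢(ε)| = 1, |𝒢(εw_1)| = 3, and: (a) if w_n = w_{n−1} then |𝒢(w)| = |𝒢(u)| + N_{n−1} + 1; (b) if w_n ≠ w_{n−1} then |𝒢(w)| = |𝒢(u)| + N_{n−1} + N_{n−2} + 1. -/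
/-- The two-letter alphabet `{L, R}` for generalized snake words. -/
inductive Letter : Type
  | L
  | R
  deriving DecidableEq

/-- The element of the generalized snake poset covered by `2m+2` (besides the relations
coming from `2m+3`): it is `2m-1` when the word turns at the `m`-th letter
(i.e. `m = 1` and `w 1 = L`, or `m ≥ 2` and `w (m-1) ≠ w m`), and `2m` otherwise. -/
def snakeSide (w : ℕ → Letter) (m : ℕ) : ℕ :=
  if (m = 1 ∧ w 1 = Letter.L) ∨ (2 ≤ m ∧ w (m - 1) ≠ w m) then 2 * m - 1 else 2 * m

/-- The covering relation of the generalized snake poset `P(w)` for the word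
`ε w₁ ⋯ w_n` (the letter `w i` for `1 ≤ i ≤ n` is the `i`-th letter).
`SnakeCov n w a b` means `a ≺ b`, i.e. `a` is covered by `b`. -/
inductive SnakeCov (n : ℕ) (w : ℕ → Letter) : ℕ → ℕ → Prop
  | cov10 : SnakeCov n w 1 0
  | cov20 : SnakeCov n w 2 0
  | cov31 : SnakeCov n w 3 1
  | cov32 : SnakeCov n w 3 2
  | covOdd (m : ℕ) (h1 : 1 ≤ m) (h2 : m ≤ n) : SnakeCov n w (2 * m + 3) (2 * m + 1)
  | covBot (m : ℕ) (h1 : 1 ≤ m) (h2 : m ≤ n) : SnakeCov n w (2 * m + 3) (2 * m + 2)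
  | covSide (m : ℕ) (h1 : 1 ≤ m) (h2 : m ≤ n) : SnakeCov n w (2 * m + 2) (snakeSide w m)

/-- The order relation of the generalized snake poset `P(w)` on `{0, …, 2n+3}`:
the reflexive-transitive closure of the covering relation. -/
def SnakeLE (n : ℕ) (w : ℕ → Letter) : ℕ → ℕ → Prop :=
  Relation.ReflTransGen (SnakeCov n w)

theorem snakeCov_lt {n : ℕ} {w : ℕ → Letter} {a b : ℕ} (h : SnakeCov n w a b) : b < a := by
  cases h
  case covSide m h1 h2 => unfold snakeSide; split <;> omega
  all_goals omega

theorem snakeLE_le {n : ℕ} {w : ℕ → Letter} {a b : ℕ} (h : SnakeLE n w a b) : b ≤ a := by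
  induction h with
  | refl => exact le_refl a
  | tail _ hc ih => exact le_trans (le_of_lt (snakeCov_lt hc)) ih

/-- The generalized snake poset `P(ε w₁ ⋯ w_n)` as a type: its elements are `0, 1, …, 2n+3`. -/
def SnakePoset (n : ℕ) (w : ℕ → Letter) : Type := Fin (2 * n + 4)

instance (n : ℕ) (w : ℕ → Letter) : PartialOrder (SnakePoset n w) where
  le a b := SnakeLE n w a.1 b.1
  le_refl _ := Relation.ReflTransGen.refl
  le_trans _ _ _ h1 h2 := Relation.ReflTransGen.trans h1 h2
  le_antisymm a b h1 h2 := Fin.ext (Nat.le_antisymm (snakeLE_le h2) (snakeLE_le h1))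

/-- The number of linear extensions of `P(ε w₁ ⋯ w_n)`: order-preserving bijections
onto the chain `Fin (2n+4)`.  By Stanley's theorem this is the normalized volume of
the order polytope `O(P(w))`. -/
noncomputable def linExtCount (n : ℕ) (w : ℕ → Letter) : ℕ :=
  Nat.card {f : SnakePoset n w ≃ Fin (2 * n + 4) //
    ∀ a b : SnakePoset n w, a ≤ b → f a ≤ f b}

/-- The collection of filters (upper order ideals) of `P(ε w₁ ⋯ w_n)`,
as subsets of `{0, …, 2n+3} ⊆ ℕ`. -/
def SnakeFilters (n : ℕ) (w : ℕ → Letter) : Set (Set ℕ) :=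
  {A | (∀ a ∈ A, a < 2 * n + 4) ∧ ∀ a ∈ A, ∀ b, SnakeLE n w a b → b ∈ A}

/-- The filter of `P(ε w₁ ⋯ w_n)` generated by a set `S`: its upward closure. -/
def snakeUp (n : ℕ) (w : ℕ → Letter) (S : Set ℕ) : Set ℕ :=
  {b | ∃ a ∈ S, SnakeLE n w a b}

/-- The alternating word `L R L R ⋯` (letter `i` is `L` for odd `i`),
defining the snake poset `S_n = P(ε L R L R ⋯)`. -/
def altWord : ℕ → Letter := fun i => if i % 2 = 1 then Letter.L else Letter.R

/-- Flipping a letter `L ↔ R`. -/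
def Letter.flip : Letter → Letter
  | Letter.L => Letter.R
  | Letter.R => Letter.L

/-- The swap operation `f_i`: flip all letters with index `≥ i`. -/
def swapFrom (w : ℕ → Letter) (i : ℕ) : ℕ → Letter :=
  fun j => if i ≤ j then (w j).flip else w j

/-- Membership in `𝒱`: the letter sequence `w₁ ⋯ w_n` contains neither `LRL` nor
`RLR` as a consecutive substring. -/
def InV (n : ℕ) (w : ℕ → Letter) : Prop :=
  ∀ i, 1 ≤ i → i + 2 ≤ n → w i = w (i + 1) ∨ w (i + 1) = w (i + 2)

/-- The order on `{0, …, 2n+5}` making `P̂(w)`: the poset `P(w)` (elements `0, …, 2n+3`)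
with a new maximum `2n+4` and a new minimum `2n+5` adjoined. -/
def SnakeHatLE (n : ℕ) (w : ℕ → Letter) (a b : ℕ) : Prop :=
  a = 2 * n + 5 ∨ b = 2 * n + 4 ∨ (a < 2 * n + 4 ∧ b < 2 * n + 4 ∧ SnakeLE n w a b)

/-- The lattice `P̂(w)`: `P(w)` with a new minimum `0̂ = 2n+5` and maximum `1̂ = 2n+4`. -/
def SnakeHat (n : ℕ) (w : ℕ → Letter) : Type := Fin (2 * n + 6)

instance (n : ℕ) (w : ℕ → Letter) : PartialOrder (SnakeHat n w) where
  le a b := SnakeHatLE n w a.1 b.1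
  le_refl a := by
    by_cases h5 : a.1 = 2 * n + 5
    · exact Or.inl h5
    · by_cases h4 : a.1 = 2 * n + 4
      · exact Or.inr (Or.inl h4)
      · have := a.2
        exact Or.inr (Or.inr ⟨by omega, by omega, Relation.ReflTransGen.refl⟩)
  le_trans a b c hab hbc := by
    rcases hab with h | h | ⟨ha, hb, hab⟩
    · exact Or.inl h
    · rcases hbc with h' | h' | ⟨hb', hc, hbc⟩
      · exact absurd h' (by omega)
      · exact Or.inr (Or.inl h')
      · exact absurd h (by omega)
    · rcases hbc with h' | h' | ⟨hb', hc, hbc⟩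
      · exact absurd h' (by omega)
      · exact Or.inr (Or.inl h')
      · exact Or.inr (Or.inr ⟨ha, hc, Relation.ReflTransGen.trans hab hbc⟩)
  le_antisymm a b h1 h2 := by
    apply Fin.ext
    rcases h1 with h | h | ⟨ha, hb, hab⟩ <;>
      rcases h2 with h' | h' | ⟨ha', hb', hba⟩ <;>
        first
          | omega
          | exact Nat.le_antisymm (snakeLE_le hba) (snakeLE_le hab)

/-- An element `x` of a (finite) lattice is meet-irreducible if it is not the maximum
element and whenever `x` is the meet (greatest lower bound) of `y` and `z`,
one has `x = y` or `x = z`. -/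
def MeetIrred {α : Type*} [PartialOrder α] (x : α) : Prop :=
  ¬IsTop x ∧ ∀ y z : α, IsGLB {y, z} x → x = y ∨ x = z

/-- The poset `Q_w` of meet-irreducible elements of `P̂(w)`, as an induced subposet. -/
abbrev SnakeQ (n : ℕ) (w : ℕ → Letter) : Type :=
  {x : SnakeHat n w // MeetIrred x}

/-- The vertex set of the order polytope `O(α)` of a finite poset `α`: the 0/1 indicator
vectors of the filters of `α`. -/
def OPVertexSet (α : Type*) [PartialOrder α] : Set (α → ℝ) :=
  {v | ∃ A : Set α, (∀ a ∈ A, ∀ b, a ≤ b → b ∈ A) ∧ v = A.indicator fun _ => (1 : ℝ)}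

/-- A circuit of a point configuration: an affinely dependent set all of whose proper
subsets are affinely independent. -/
def IsAffCircuit {α : Type*} (Z : Set (α → ℝ)) : Prop :=
  ¬AffineIndependent ℝ (Subtype.val : Z → (α → ℝ)) ∧
    ∀ Y : Set (α → ℝ), Y ⊂ Z → AffineIndependent ℝ (Subtype.val : Y → (α → ℝ))

/-- The adjacency relation of the graph `G(w)` on vertices `{0, 1, …, n}`:
consecutive indices are adjacent, and `i` and `i+2` are adjacent when
`w (i+1) ≠ w (i+2)` (a turn of the word). -/
def snakeAdj (n : ℕ) (w : ℕ → Letter) (i j : ℕ) : Prop :=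
  (j = i + 1 ∧ j ≤ n) ∨ (i = j + 1 ∧ i ≤ n) ∨
    (j = i + 2 ∧ j ≤ n ∧ w (i + 1) ≠ w (i + 2)) ∨
    (i = j + 2 ∧ i ≤ n ∧ w (j + 1) ≠ w (j + 2))

/-- `𝒢(w)`: the collection of nonempty subsets of `{0, …, n}` inducing connected
subgraphs of `G(w)`. -/
def GSets (n : ℕ) (w : ℕ → Letter) : Set (Set ℕ) :=
  {S | S.Nonempty ∧ (∀ i ∈ S, i ≤ n) ∧
    ∀ a ∈ S, ∀ b ∈ S,
      Relation.ReflTransGen (fun x y => x ∈ S ∧ y ∈ S ∧ snakeAdj n w x y) a b}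

section SnakeAux

open Relation

variable {n : ℕ} {w : ℕ → Letter}

lemma snakeAdj_symm {x y : ℕ} (h : snakeAdj n w x y) : snakeAdj n w y x := by
  rcases h with h|h|h|h
  · exact Or.inr (Or.inl h)
  · exact Or.inl h
  · exact Or.inr (Or.inr (Or.inr h))
  · exact Or.inr (Or.inr (Or.inl h))

lemma snakeAdj_mono {x y : ℕ} (h : snakeAdj n w x y) : snakeAdj (n + 1) w x y := by
  rcases h with ⟨h1,h2⟩|⟨h1,h2⟩|⟨h1,h2,h3⟩|⟨h1,h2,h3⟩
  · exact Or.inl ⟨h1, by omega⟩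
  · exact Or.inr (Or.inl ⟨h1, by omega⟩)
  · exact Or.inr (Or.inr (Or.inl ⟨h1, by omega, h3⟩))
  · exact Or.inr (Or.inr (Or.inr ⟨h1, by omega, h3⟩))

lemma snakeAdj_restrict {x y : ℕ} (hx : x ≤ n) (hy : y ≤ n)
    (h : snakeAdj (n + 1) w x y) : snakeAdj n w x y := by
  rcases h with ⟨h1,h2⟩|⟨h1,h2⟩|⟨h1,h2,h3⟩|⟨h1,h2,h3⟩
  · exact Or.inl ⟨h1, by omega⟩
  · exact Or.inr (Or.inl ⟨h1, by omega⟩)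
  · exact Or.inr (Or.inr (Or.inl ⟨h1, by omega, h3⟩))
  · exact Or.inr (Or.inr (Or.inr ⟨h1, by omega, h3⟩))

lemma snakeAdj_to_top (hn : 2 ≤ n) {x : ℕ} (h : snakeAdj n w x n) :
    x = n - 1 ∨ (x = n - 2 ∧ w (n - 1) ≠ w n) := by
  rcases h with ⟨h1,h2⟩|⟨h1,h2⟩|⟨h1,h2,h3⟩|⟨h1,h2,h3⟩
  · omega
  · exact Or.inl (by omega)
  · refine Or.inr ⟨by omega, ?_⟩
    have e1 : n - 1 = x + 1 := by omega
    have e2 : n = x + 2 := by omega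
    rw [e1, e2]; exact h3
  · omega

lemma rtg_symm {α : Type*} {r : α → α → Prop} (hs : ∀ x y, r x y → r y x) {a b : α}
    (h : Relation.ReflTransGen r a b) : Relation.ReflTransGen r b a := by
  induction h with
  | refl => exact .refl
  | tail _ hc ih => exact Relation.ReflTransGen.head (hs _ _ hc) ih

lemma rtg_map {α β : Type*} (f : α → β) {r : α → α → Prop} {s : β → β → Prop}
    (h : ∀ x y, r x y → Relation.ReflTransGen s (f x) (f y)) {a b : α}
    (hp : Relation.ReflTransGen r a b) : Relation.ReflTransGen s (f a) (f b) := by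
  induction hp with
  | refl => exact .refl
  | tail _ hc ih => exact ih.trans (h _ _ hc)

lemma singleton_mem_gsets (n : ℕ) (w : ℕ → Letter) : ({n} : Set ℕ) ∈ GSets n w := by
  refine ⟨⟨n, rfl⟩, fun i hi => by rw [Set.mem_singleton_iff] at hi; omega,
    fun a ha b hb => ?_⟩
  rw [Set.mem_singleton_iff] at ha hb; subst ha; subst hb; exact .refl

lemma gsets_finite (n : ℕ) (w : ℕ → Letter) : (GSets n w).Finite := by
  apply Set.Finite.subset (Set.Finite.finite_subsets (Set.finite_Iic n))
  intro S hS i hi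
  exact hS.2.1 i hi

lemma gsets_cast (hn : 1 ≤ n) {S : Set ℕ} (hbd : ∀ i ∈ S, i ≤ n - 1) :
    S ∈ GSets (n - 1) w ↔ S ∈ GSets n w := by
  have e : n - 1 + 1 = n := by omega
  constructor
  · rintro ⟨h1, h2, h3⟩
    refine ⟨h1, fun i hi => by have := hbd i hi; omega, fun a ha b hb => ?_⟩
    refine Relation.ReflTransGen.mono ?_ _ _ (h3 a ha b hb)
    rintro x y ⟨hx, hy, hxy⟩
    exact ⟨hx, hy, by have := snakeAdj_mono (w := w) hxy; rwa [e] at this⟩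
  · rintro ⟨h1, h2, h3⟩
    refine ⟨h1, hbd, fun a ha b hb => ?_⟩
    refine Relation.ReflTransGen.mono ?_ _ _ (h3 a ha b hb)
    rintro x y ⟨hx, hy, hxy⟩
    refine ⟨hx, hy, snakeAdj_restrict (hbd x hx) (hbd y hy) ?_⟩
    rwa [e]

lemma exists_neighbor {S : Set ℕ} {m : ℕ} (hmn : m ≠ n)
    (hp : Relation.ReflTransGen (fun x y => x ∈ S ∧ y ∈ S ∧ snakeAdj n w x y) m n) :
    ∃ c ∈ S, c ≠ n ∧ snakeAdj n w c n := by
  have H : ∀ b, Relation.ReflTransGen (fun x y => x ∈ S ∧ y ∈ S ∧ snakeAdj n w x y) m b →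
      b = n → ∃ c ∈ S, c ≠ n ∧ snakeAdj n w c n := by
    intro b hb
    induction hb with
    | refl => intro h; exact absurd h hmn
    | @tail x y hxy hstep ih =>
      intro h
      by_cases hx : x = n
      · exact ih hx
      · exact ⟨x, hstep.1, hx, h ▸ hstep.2.2⟩
  exact H n hp rfl

lemma remove_lemma (hn : 2 ≤ n) {S : Set ℕ}
    (hS : S ∈ GSets n w) (hnS : n ∈ S) (hne : S ≠ {n}) :
    (S \ {n}) ∈ GSets (n - 1) w ∧ ((n - 1) ∈ S ∨ ((n - 2) ∈ S ∧ w (n - 1) ≠ w n)) := by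
  classical
  obtain ⟨hSne, hbd, hconn⟩ := hS
  obtain ⟨m, hmS, hmn⟩ : ∃ m ∈ S, m ≠ n := by
    by_contra h
    push_neg at h
    exact hne (Set.eq_singleton_iff_unique_mem.mpr ⟨hnS, h⟩)
  obtain ⟨c, hcS, hcn, hcadj⟩ := exists_neighbor hmn (hconn m hmS n hnS)
  have hside : (n - 1) ∈ S ∨ ((n - 2) ∈ S ∧ w (n - 1) ≠ w n) := by
    rcases snakeAdj_to_top hn hcadj with h | ⟨h, hw'⟩
    · exact Or.inl (h ▸ hcS)
    · exact Or.inr ⟨h ▸ hcS, hw'⟩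
  refine ⟨?_, hside⟩
  set p : ℕ := if (n - 1) ∈ S then n - 1 else n - 2 with hp
  have hpS : p ∈ S := by
    rcases hside with h | ⟨h, _⟩
    · simp only [hp, if_pos h]; exact h
    · by_cases h1 : (n - 1) ∈ S
      · simp only [hp, if_pos h1]; exact h1
      · simp only [hp, if_neg h1]; exact h
  have hpn : p ≠ n := by rw [hp]; split <;> omega
  have hpd : p ∈ S \ {n} := ⟨hpS, by simpa using hpn⟩
  set r' : ℕ → ℕ → Prop :=
    fun x y => x ∈ S \ {n} ∧ y ∈ S \ {n} ∧ snakeAdj (n - 1) w x y with hr'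
  have e : n - 1 + 1 = n := by omega
  have hkey : ∀ y ∈ S, y ≠ n → snakeAdj n w y n → Relation.ReflTransGen r' p y := by
    intro y hy hyn hadj
    have hyd : y ∈ S \ {n} := ⟨hy, by simpa using hyn⟩
    by_cases hpy : p = y
    · rw [hpy]
    rcases snakeAdj_to_top hn hadj with h | ⟨h, _⟩
    · -- y = n - 1 ∈ S, so p = n - 1 = y, contradiction
      exfalso; apply hpy; rw [hp, if_pos (h ▸ hy), h]
    · -- y = n - 2; p ≠ y so p = n - 1
      have hp1 : p = n - 1 := by
        by_cases h1 : (n - 1) ∈ S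
        · rw [hp, if_pos h1]
        · exfalso; apply hpy; rw [hp, if_neg h1, h]
      refine Relation.ReflTransGen.single ⟨hpd, hyd, ?_⟩
      exact Or.inr (Or.inl ⟨by omega, by omega⟩)
  have hsymm : ∀ x y, r' x y → r' y x := by
    rintro x y ⟨hx, hy, hxy⟩
    exact ⟨hy, hx, snakeAdj_symm hxy⟩
  have hstep : ∀ x y, (x ∈ S ∧ y ∈ S ∧ snakeAdj n w x y) →
      Relation.ReflTransGen r' (if x = n then p else x) (if y = n then p else y) := by
    rintro x y ⟨hx, hy, hxy⟩
    by_cases hxn : x = n <;> by_cases hyn : y = n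
    · simp only [if_pos hxn, if_pos hyn]
      exact .refl
    · simp only [if_pos hxn, if_neg hyn]
      subst hxn
      exact hkey y hy hyn (snakeAdj_symm hxy)
    · simp only [if_neg hxn, if_pos hyn]
      subst hyn
      exact rtg_symm hsymm (hkey x hx hxn hxy)
    · simp only [if_neg hxn, if_neg hyn]
      refine Relation.ReflTransGen.single ⟨⟨hx, by simpa using hxn⟩, ⟨hy, by simpa using hyn⟩, ?_⟩
      refine snakeAdj_restrict (by have := hbd x hx; omega) (by have := hbd y hy; omega) ?_
      rwa [e]
  refine ⟨⟨p, hpd⟩, fun i hi => by have := hbd i hi.1; have := hi.2; simp at this; omega,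
    fun a ha b hb => ?_⟩
  have := rtg_map (fun x => if x = n then p else x) hstep (hconn a ha.1 b hb.1)
  have ean : a ≠ n := by simpa using ha.2
  have ebn : b ≠ n := by simpa using hb.2
  simp only [if_neg ean, if_neg ebn] at this
  exact this

lemma insert_mem_gsets (hn : 2 ≤ n) {S : Set ℕ}
    (hS : S ∈ GSets (n - 1) w) {c : ℕ} (hc : c ∈ S) (hadj : snakeAdj n w c n) :
    insert n S ∈ GSets n w := by
  obtain ⟨hne, hbd, hconn⟩ := hS
  have e : n - 1 + 1 = n := by omega
  refine ⟨⟨n, Set.mem_insert _ _⟩, ?_, ?_⟩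
  · rintro i (rfl | hi)
    · exact le_refl i
    · have := hbd i hi; omega
  · set r : ℕ → ℕ → Prop :=
      fun x y => x ∈ insert n S ∧ y ∈ insert n S ∧ snakeAdj n w x y with hr
    have lift : ∀ a ∈ S, ∀ b ∈ S, Relation.ReflTransGen r a b := by
      intro a ha b hb
      refine Relation.ReflTransGen.mono ?_ _ _ (hconn a ha b hb)
      rintro x y ⟨hx, hy, hxy⟩
      exact ⟨Set.mem_insert_of_mem _ hx, Set.mem_insert_of_mem _ hy,
        by have := snakeAdj_mono (w := w) hxy; rwa [e] at this⟩
    rintro a (rfl | ha) b (rfl | hb)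
    · exact .refl
    · exact Relation.ReflTransGen.head
        ⟨Set.mem_insert _ _, Set.mem_insert_of_mem _ hc, snakeAdj_symm hadj⟩ (lift c hc b hb)
    · exact (lift a ha c hc).tail ⟨Set.mem_insert_of_mem _ hc, Set.mem_insert _ _, hadj⟩
    · exact lift a ha b hb

lemma gsets_count (hn : 2 ≤ n) :
    (GSets n w).ncard =
      (GSets (n - 1) w).ncard +
        {S | S ∈ GSets (n - 1) w ∧
          ((n - 1) ∈ S ∨ ((n - 2) ∈ S ∧ w (n - 1) ≠ w n))}.ncard + 1 := by
  classical
  set G' := GSets (n - 1) w with hG'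
  set T := {S | S ∈ G' ∧ ((n - 1) ∈ S ∨ ((n - 2) ∈ S ∧ w (n - 1) ≠ w n))} with hT
  have hfinG' : G'.Finite := gsets_finite (n - 1) w
  have hfinT : T.Finite := hfinG'.subset fun S hS => hS.1
  have hnotmem : ∀ S ∈ G', n ∉ S := fun S hS hmem => by have := hS.2.1 n hmem; omega
  have hsplit : GSets n w = G' ∪ insert {n} ((fun S => insert n S) '' T) := by
    ext S
    simp only [Set.mem_union, Set.mem_insert_iff, Set.mem_image]
    constructor
    · intro hS
      by_cases hnS : n ∈ S
      · by_cases hSn : S = {n}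
        · exact Or.inr (Or.inl hSn)
        · obtain ⟨hrm, hside⟩ := remove_lemma hn hS hnS hSn
          refine Or.inr (Or.inr ⟨S \ {n}, ⟨hrm, ?_⟩, ?_⟩)
          · rcases hside with h | ⟨h, hw'⟩
            · exact Or.inl ⟨h, by simp only [Set.mem_singleton_iff]; omega⟩
            · exact Or.inr ⟨⟨h, by simp only [Set.mem_singleton_iff]; omega⟩, hw'⟩
          · rw [Set.insert_diff_singleton, Set.insert_eq_self.mpr hnS]
      · left
        have hbd : ∀ i ∈ S, i ≤ n - 1 := by
          intro i hi
          have h1 := hS.2.1 i hi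
          have h2 : i ≠ n := fun h => hnS (h ▸ hi)
          omega
        exact (gsets_cast (by omega) hbd).mpr hS
    · rintro (hS | rfl | ⟨S₀, ⟨hS₀, hside⟩, rfl⟩)
      · have hbd : ∀ i ∈ S, i ≤ n - 1 := fun i hi => hS.2.1 i hi
        exact (gsets_cast (by omega) hbd).mp hS
      · exact singleton_mem_gsets n w
      · rcases hside with h | ⟨h, hw'⟩
        · exact insert_mem_gsets hn hS₀ h (Or.inl ⟨by omega, le_refl n⟩)
        · refine insert_mem_gsets hn hS₀ h
            (Or.inr (Or.inr (Or.inl ⟨by omega, le_refl n, ?_⟩)))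
          have e1 : n - 2 + 1 = n - 1 := by omega
          have e2 : n - 2 + 2 = n := by omega
          rw [e1, e2]; exact hw'
  have hdisj : Disjoint G' (insert {n} ((fun S => insert n S) '' T)) := by
    rw [Set.disjoint_left]
    intro S hS hmem
    rcases Set.mem_insert_iff.mp hmem with rfl | hmem'
    · exact hnotmem _ hS rfl
    · obtain ⟨S₀, _, rfl⟩ := hmem'
      exact hnotmem _ hS (Set.mem_insert _ _)
  have hninT : ({n} : Set ℕ) ∉ (fun S => insert n S) '' T := by
    rintro ⟨S₀, ⟨-, hside⟩, heq⟩
    simp only at heq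
    rcases hside with h | ⟨h, -⟩
    · have : (n - 1 : ℕ) ∈ ({n} : Set ℕ) := heq ▸ Set.mem_insert_of_mem _ h
      simp only [Set.mem_singleton_iff] at this; omega
    · have : (n - 2 : ℕ) ∈ ({n} : Set ℕ) := heq ▸ Set.mem_insert_of_mem _ h
      simp only [Set.mem_singleton_iff] at this; omega
  have hinj : Set.InjOn (fun S => insert n S) T := by
    intro S₁ h₁ S₂ h₂ heq
    simp only at heq
    have hn₁ : n ∉ S₁ := hnotmem _ h₁.1
    have hn₂ : n ∉ S₂ := hnotmem _ h₂.1
    ext x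
    constructor
    · intro hx
      have hx' : x ∈ insert n S₂ := heq ▸ Set.mem_insert_of_mem _ hx
      rcases Set.mem_insert_iff.mp hx' with rfl | h
      · exact absurd hx hn₁
      · exact h
    · intro hx
      have hx' : x ∈ insert n S₁ := heq.symm ▸ Set.mem_insert_of_mem _ hx
      rcases Set.mem_insert_iff.mp hx' with rfl | h
      · exact absurd hx hn₂
      · exact h
  rw [hsplit, Set.ncard_union_eq hdisj hfinG' ((hfinT.image _).insert _),
      Set.ncard_insert_of_notMem hninT (hfinT.image _),
      Set.ncard_image_of_injOn hinj]
  omega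

lemma gsets_zero (w : ℕ → Letter) : GSets 0 w = {({0} : Set ℕ)} := by
  ext S
  simp only [Set.mem_singleton_iff]
  constructor
  · rintro ⟨⟨x, hx⟩, hbd, -⟩
    have hx0 : x = 0 := by have := hbd x hx; omega
    ext y
    simp only [Set.mem_singleton_iff]
    constructor
    · intro hy; have := hbd y hy; omega
    · intro hy; subst hy; exact hx0 ▸ hx
  · rintro rfl
    exact singleton_mem_gsets 0 w

lemma gsets_one (w : ℕ → Letter) : GSets 1 w = {({0} : Set ℕ), {1}, {0, 1}} := by
  ext S
  simp only [Set.mem_insert_iff, Set.mem_singleton_iff]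
  constructor
  · rintro ⟨⟨x, hx⟩, hbd, -⟩
    by_cases h0 : (0 : ℕ) ∈ S <;> by_cases h1 : (1 : ℕ) ∈ S
    · refine Or.inr (Or.inr ?_)
      ext y
      simp only [Set.mem_insert_iff, Set.mem_singleton_iff]
      constructor
      · intro hy; have := hbd y hy; omega
      · rintro (rfl | rfl); exacts [h0, h1]
    · refine Or.inl ?_
      ext y
      simp only [Set.mem_singleton_iff]
      constructor
      · intro hy
        have hb := hbd y hy
        have : y ≠ 1 := fun h => h1 (h ▸ hy)
        omega
      · rintro rfl; exact h0
    · refine Or.inr (Or.inl ?_)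
      ext y
      simp only [Set.mem_singleton_iff]
      constructor
      · intro hy
        have hb := hbd y hy
        have : y ≠ 0 := fun h => h0 (h ▸ hy)
        omega
      · rintro rfl; exact h1
    · exfalso
      have := hbd x hx
      interval_cases x
      · exact h0 hx
      · exact h1 hx
  · have mem0 : (0 : ℕ) ∈ ({0, 1} : Set ℕ) := Set.mem_insert _ _
    have mem1 : (1 : ℕ) ∈ ({0, 1} : Set ℕ) := Set.mem_insert_of_mem _ rfl
    rintro (rfl | rfl | rfl)
    · refine ⟨⟨0, rfl⟩, fun i hi => ?_, fun a ha b hb => ?_⟩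
      · simp only [Set.mem_singleton_iff] at hi; omega
      · simp only [Set.mem_singleton_iff] at ha hb; subst ha; subst hb; exact .refl
    · exact singleton_mem_gsets 1 w
    · refine ⟨⟨0, mem0⟩, ?_, ?_⟩
      · rintro i (rfl | hi)
        · omega
        · simp only [Set.mem_singleton_iff] at hi; omega
      · rintro a (rfl | ha) b (rfl | hb)
        · exact .refl
        · simp only [Set.mem_singleton_iff] at hb; subst hb
          exact Relation.ReflTransGen.single ⟨mem0, mem1, Or.inl ⟨rfl, le_refl 1⟩⟩
        · simp only [Set.mem_singleton_iff] at ha; subst ha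
          exact Relation.ReflTransGen.single ⟨mem1, mem0, Or.inr (Or.inl ⟨rfl, le_refl 1⟩)⟩
        · simp only [Set.mem_singleton_iff] at ha hb; subst ha; subst hb; exact .refl

lemma card_three : ({({0} : Set ℕ), {1}, {0, 1}} : Set (Set ℕ)).ncard = 3 := by
  have h01 : ({0} : Set ℕ) ≠ {1} := by
    intro h
    have : (0 : ℕ) ∈ ({1} : Set ℕ) := by rw [← h]; rfl
    simp at this
  have h001 : ({0} : Set ℕ) ≠ {0, 1} := by
    intro h
    have : (1 : ℕ) ∈ ({0} : Set ℕ) := by rw [h]; exact Set.mem_insert_of_mem _ rfl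
    simp at this
  have h101 : ({1} : Set ℕ) ≠ {0, 1} := by
    intro h
    have : (0 : ℕ) ∈ ({1} : Set ℕ) := by rw [h]; exact Set.mem_insert _ _
    simp at this
  rw [Set.ncard_insert_of_notMem
        (by simp only [Set.mem_insert_iff, Set.mem_singleton_iff]; push_neg
            exact ⟨h01, h001⟩)
        ((Set.finite_singleton _).insert _),
      Set.ncard_insert_of_notMem
        (by simp only [Set.mem_singleton_iff]; exact h101) (Set.finite_singleton _),
      Set.ncard_singleton]

end SnakeAux

theorem stmt14 (n : ℕ) (w : ℕ → Letter) (hn : 2 ≤ n)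
    (hu : InV (n - 1) w) (hw : InV n w) :
    (GSets 0 w).ncard = 1 ∧
    (GSets 1 w).ncard = 3 ∧
    (w n = w (n - 1) →
      (GSets n w).ncard =
        (GSets (n - 1) w).ncard +
          {S | S ∈ GSets (n - 1) w ∧ (n - 1) ∈ S ∧ n ∉ S}.ncard + 1) ∧
    (w n ≠ w (n - 1) →
      (GSets n w).ncard =
        (GSets (n - 1) w).ncard +
          {S | S ∈ GSets (n - 1) w ∧ (n - 1) ∈ S ∧ n ∉ S}.ncard +
          {S | S ∈ GSets (n - 1) w ∧ (n - 2) ∈ S ∧ (n - 1) ∉ S}.ncard + 1) := by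
  have hfin : (GSets (n - 1) w).Finite := gsets_finite (n - 1) w
  have hnotmem : ∀ S ∈ GSets (n - 1) w, n ∉ S := fun S hS hmem => by
    have := hS.2.1 n hmem; omega
  refine ⟨?_, ?_, ?_, ?_⟩
  · rw [gsets_zero]; exact Set.ncard_singleton _
  · rw [gsets_one]; exact card_three
  · intro hcase
    have key := gsets_count (w := w) hn
    have hTeq : {S | S ∈ GSets (n - 1) w ∧ ((n - 1) ∈ S ∨ ((n - 2) ∈ S ∧ w (n - 1) ≠ w n))}
        = {S | S ∈ GSets (n - 1) w ∧ (n - 1) ∈ S ∧ n ∉ S} := by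
      ext S
      simp only [Set.mem_setOf_eq]
      constructor
      · rintro ⟨hS, h | ⟨-, hw'⟩⟩
        · exact ⟨hS, h, hnotmem S hS⟩
        · exact absurd hcase.symm hw'
      · rintro ⟨hS, h, -⟩
        exact ⟨hS, Or.inl h⟩
    rw [key, hTeq]
  · intro hcase
    have key := gsets_count (w := w) hn
    have hTeq : {S | S ∈ GSets (n - 1) w ∧ ((n - 1) ∈ S ∨ ((n - 2) ∈ S ∧ w (n - 1) ≠ w n))}
        = {S | S ∈ GSets (n - 1) w ∧ (n - 1) ∈ S ∧ n ∉ S} ∪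
          {S | S ∈ GSets (n - 1) w ∧ (n - 2) ∈ S ∧ (n - 1) ∉ S} := by
      ext S
      simp only [Set.mem_setOf_eq, Set.mem_union]
      constructor
      · rintro ⟨hS, hside⟩
        by_cases h1 : (n - 1) ∈ S
        · exact Or.inl ⟨hS, h1, hnotmem S hS⟩
        · rcases hside with h | ⟨h, -⟩
          · exact absurd h h1
          · exact Or.inr ⟨hS, h, h1⟩
      · rintro (⟨hS, h, -⟩ | ⟨hS, h, h1⟩)
        · exact ⟨hS, Or.inl h⟩
        · exact ⟨hS, Or.inr ⟨h, Ne.symm hcase⟩⟩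
    have hdisj : Disjoint {S | S ∈ GSets (n - 1) w ∧ (n - 1) ∈ S ∧ n ∉ S}
        {S | S ∈ GSets (n - 1) w ∧ (n - 2) ∈ S ∧ (n - 1) ∉ S} :=
      Set.disjoint_left.mpr (by rintro S ⟨-, h, -⟩ ⟨-, -, h'⟩; exact h' h)
    rw [key, hTeq,
      Set.ncard_union_eq hdisj (hfin.subset fun S hS => hS.1) (hfin.subset fun S hS => hS.1)]
    omega
end

section
/- Let w ∈ 𝒱 be a generalized snake word of length n and let d = |Q_w| (so d = n + 4). For every affinely independent family u_0, u_1, …, u_d of d+1 points of the vertex set V(Q_w) ⊆ ℝ^{Q_w} of the order polytope O(Q_w), the d × d matrix with columns u_1 − u_0, …, u_d − u_0 has determinant ±1; i.e., every full-dimensional simplex whose vertices lie in V(Q_w) has normalized volume one (Euclidean volume 1/d!). Consequently, every triangulation of O(Q_w) using vertices of O(Q_w) is unimodular. -/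
/-! ## Auxiliary determinant lemmas -/


/-- The set `{0, 1, -1}` of admissible determinants. -/
def detSet : Set ℝ := {0, 1, -1}

lemma detSet_unit_mul {x u : ℝ} (hx : x ∈ detSet) (hu : u = 1 ∨ u = -1) :
    u * x ∈ detSet := by
  rcases hu with rfl | rfl <;> rcases hx with rfl | rfl | rfl <;> norm_num [detSet]

lemma neg_one_pow_mem (k : ℕ) : ((-1 : ℝ)) ^ k = 1 ∨ ((-1 : ℝ)) ^ k = -1 := by
  rcases Nat.even_or_odd k with h | h
  · left; exact h.neg_one_pow
  · right; exact h.neg_one_pow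

/-- Determinant of a "digraph incidence"-type matrix is `0` or `±1`. -/
lemma inc_det : ∀ (N : ℕ) (a b : Fin N → ℕ),
    (Matrix.of fun i j : Fin N =>
      ((if (i : ℕ) + 1 = b j then 1 else 0) - (if (i : ℕ) + 1 = a j then 1 else 0) : ℝ)).det
      ∈ detSet := by
  intro N
  induction N with
  | zero =>
    intro a b
    simp [detSet, Matrix.det_fin_zero]
  | succ N ih =>
    intro a b
    have key : ∀ (a b : Fin (N + 1) → ℕ) (j : Fin (N + 1)),
        (1 ≤ b j ∧ b j ≤ N + 1) → ¬(1 ≤ a j ∧ a j ≤ N + 1) →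
        (Matrix.of fun i j : Fin (N + 1) =>
          ((if (i : ℕ) + 1 = b j then 1 else 0) - (if (i : ℕ) + 1 = a j then 1 else 0) : ℝ)).det
          ∈ detSet := by
      intro a b j hb ha
      set M : Matrix (Fin (N + 1)) (Fin (N + 1)) ℝ := Matrix.of fun i j : Fin (N + 1) =>
        ((if (i : ℕ) + 1 = b j then 1 else 0) - (if (i : ℕ) + 1 = a j then 1 else 0) : ℝ) with hM
      obtain ⟨r, hrval⟩ : ∃ r : Fin (N + 1), (r : ℕ) = b j - 1 :=
        ⟨⟨b j - 1, by omega⟩, rfl⟩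
      have hentry : M r j = 1 := by
        have h1 : (r : ℕ) + 1 = b j := by omega
        have h2 : ¬((r : ℕ) + 1 = a j) := by omega
        show (if (r : ℕ) + 1 = b j then (1:ℝ) else 0) - (if (r : ℕ) + 1 = a j then (1:ℝ) else 0) = 1
        rw [if_pos h1, if_neg h2]; ring
      have hz : ∀ i ∈ Finset.univ, i ≠ r →
          (-1 : ℝ) ^ ((i : ℕ) + (j : ℕ)) * M i j * (M.submatrix i.succAbove j.succAbove).det = 0 := by
        intro i _ hir
        have hir' : (i : ℕ) ≠ (r : ℕ) := fun h => hir (Fin.ext h)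
        have h1 : ¬((i : ℕ) + 1 = b j) := by omega
        have h2 : ¬((i : ℕ) + 1 = a j) := by omega
        have : M i j = 0 := by simp [hM, h1, h2]
        rw [this]; ring
      rw [Matrix.det_succ_column M j,
        Finset.sum_eq_single r hz (fun h => absurd (Finset.mem_univ r) h), hentry, mul_one]
      set ψ : ℕ → ℕ := fun v =>
        if v ≤ (r : ℕ) then v else if v = (r : ℕ) + 1 then 0 else v - 1 with hψ
      have hval : ∀ i' : Fin N, ((r.succAbove i') : ℕ) =
          if (i' : ℕ) < (r : ℕ) then (i' : ℕ) else (i' : ℕ) + 1 := by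
        intro i'
        rcases lt_or_ge ((i' : ℕ)) ((r : ℕ)) with h | h
        · rw [if_pos h, Fin.succAbove_of_castSucc_lt, Fin.coe_castSucc]
          rwa [Fin.lt_def, Fin.coe_castSucc]
        · rw [if_neg (not_lt.mpr h), Fin.succAbove_of_le_castSucc, Fin.val_succ]
          rwa [Fin.le_def, Fin.coe_castSucc]
      have hkey : ∀ (i' : Fin N) (v : ℕ),
          (((r.succAbove i') : ℕ) + 1 = v) ↔ ((i' : ℕ) + 1 = ψ v) := by
        intro i' v
        rw [hval i']
        simp only [hψ]
        split_ifs <;> (try omega) <;> (rw [iff_false]; omega)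
      have hminor : (M.submatrix r.succAbove j.succAbove) =
          Matrix.of fun i k : Fin N =>
            ((if (i : ℕ) + 1 = (fun k => ψ (b (j.succAbove k))) k then 1 else 0) -
             (if (i : ℕ) + 1 = (fun k => ψ (a (j.succAbove k))) k then 1 else 0) : ℝ) := by
        ext i k
        simp only [Matrix.submatrix_apply, hM, Matrix.of_apply]
        rw [if_congr (hkey i (b (j.succAbove k))) rfl rfl,
            if_congr (hkey i (a (j.succAbove k))) rfl rfl]
      rw [hminor]
      exact detSet_unit_mul (ih _ _) (neg_one_pow_mem _)
    by_cases hex : ∃ j, ((1 ≤ a j ∧ a j ≤ N + 1) ∧ ¬(1 ≤ b j ∧ b j ≤ N + 1)) ∨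
        ((1 ≤ b j ∧ b j ≤ N + 1) ∧ ¬(1 ≤ a j ∧ a j ≤ N + 1))
    · obtain ⟨j, hj⟩ := hex
      rcases hj with ⟨ha', hb'⟩ | ⟨hb', ha'⟩
      · have hswap : (Matrix.of fun i j : Fin (N + 1) =>
            ((if (i : ℕ) + 1 = b j then 1 else 0) - (if (i : ℕ) + 1 = a j then 1 else 0) : ℝ)) =
            -(Matrix.of fun i j : Fin (N + 1) =>
            ((if (i : ℕ) + 1 = a j then 1 else 0) - (if (i : ℕ) + 1 = b j then 1 else 0) : ℝ)) := by
          ext i k; simp only [Matrix.of_apply, Matrix.neg_apply]; ring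
        rw [hswap, Matrix.det_neg]
        exact detSet_unit_mul (key b a j ha' hb')
          (by simpa using neg_one_pow_mem (Fintype.card (Fin (N + 1))))
      · exact key a b j hb' ha'
    · push_neg at hex
      left
      rw [← Matrix.exists_vecMul_eq_zero_iff]
      refine ⟨fun _ => 1, ?_, ?_⟩
      · intro h
        have := congrFun h 0
        simp at this
      · funext j
        have hsum : ∀ v : ℕ, (∑ i : Fin (N + 1), (if (i : ℕ) + 1 = v then (1 : ℝ) else 0)) =
            if 1 ≤ v ∧ v ≤ N + 1 then 1 else 0 := by
          intro v
          by_cases h : 1 ≤ v ∧ v ≤ N + 1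
          · rw [if_pos h]
            have heach : ∀ i : Fin (N + 1), (if (i : ℕ) + 1 = v then (1 : ℝ) else 0) =
                (if i = ⟨v - 1, by omega⟩ then (1 : ℝ) else 0) := by
              intro i
              refine if_congr ?_ rfl rfl
              rw [Fin.ext_iff]
              simp only []
              omega
            rw [Finset.sum_congr rfl (fun i _ => heach i)]
            simp
          · rw [if_neg h]
            apply Finset.sum_eq_zero
            intro i _
            rw [if_neg (by omega)]
        have hbal : (1 ≤ a j ∧ a j ≤ N + 1) ↔ (1 ≤ b j ∧ b j ≤ N + 1) := by
          have h := hex j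
          tauto
        simp only [Matrix.vecMul, dotProduct, one_mul, Matrix.of_apply, Pi.zero_apply]
        rw [Finset.sum_sub_distrib, hsum, hsum]
        by_cases h : 1 ≤ a j ∧ a j ≤ N + 1
        · rw [if_pos h, if_pos (hbal.mp h)]; ring
        · rw [if_neg h, if_neg (fun hbb => h (hbal.mpr hbb))]; ring

/-- Determinant of a matrix whose columns are indicators of intervals is `0` or `±1`. -/
lemma interval_det (N : ℕ) (a b : Fin N → ℕ) (hbN : ∀ j, b j ≤ N) :
    (Matrix.of fun i j : Fin N =>
      (if a j ≤ (i : ℕ) ∧ (i : ℕ) < b j then (1 : ℝ) else 0)).det ∈ detSet := by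
  set C : Matrix (Fin N) (Fin N) ℝ := Matrix.of fun i j : Fin N =>
    (if a j ≤ (i : ℕ) ∧ (i : ℕ) < b j then (1 : ℝ) else 0) with hC
  set D : Matrix (Fin N) (Fin N) ℝ := Matrix.of fun i k : Fin N =>
    (if i = k then (1 : ℝ) else if (k : ℕ) = (i : ℕ) + 1 then -1 else 0) with hD
  have hDtri : D.BlockTriangular id := by
    intro i k h
    have h1 : i ≠ k := by intro h'; subst h'; exact absurd h (lt_irrefl _)
    have h2 : ¬((k : ℕ) = (i : ℕ) + 1) := by
      have : (k : ℕ) < (i : ℕ) := h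
      omega
    simp [hD, h1, h2]
  have hdetD : D.det = 1 := by
    rw [Matrix.det_of_upperTriangular hDtri]
    apply Finset.prod_eq_one
    intro i _
    simp [hD]
  have hmul : D * C = Matrix.of fun i j : Fin N =>
      ((if (i : ℕ) + 1 = (if a j < b j then b j else 0) then 1 else 0) -
       (if (i : ℕ) + 1 = (if a j < b j then a j else 0) then 1 else 0) : ℝ) := by
    ext i j
    rw [Matrix.mul_apply]
    by_cases hlt : (i : ℕ) + 1 < N
    · set i1 : Fin N := ⟨(i : ℕ) + 1, hlt⟩ with hi1
      have hne : i ≠ i1 := by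
        intro h
        have := congrArg Fin.val h
        simp [hi1] at this
      have hz : ∀ k ∈ Finset.univ, k ∉ ({i, i1} : Finset (Fin N)) → D i k * C k j = 0 := by
        intro k _ hk
        simp only [Finset.mem_insert, Finset.mem_singleton] at hk
        push_neg at hk
        have h1 : i ≠ k := fun h => hk.1 h.symm
        have h2 : ¬((k : ℕ) = (i : ℕ) + 1) := by
          intro h
          exact hk.2 (Fin.ext (by simp [hi1, ← h]))
        simp [hD, h1, h2]
      rw [← Finset.sum_subset (Finset.subset_univ ({i, i1} : Finset (Fin N))) hz,
        Finset.sum_pair hne]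
      have hDii : D i i = 1 := by simp [hD]
      have hDii1 : D i i1 = -1 := by
        have h1 : i ≠ i1 := hne
        have h2 : ((i1 : ℕ) = (i : ℕ) + 1) := by simp [hi1]
        simp [hD, h1, h2]
      rw [hDii, hDii1, one_mul]
      have hCi : C i j = (if a j ≤ (i : ℕ) ∧ (i : ℕ) < b j then (1 : ℝ) else 0) := rfl
      have hCi1 : C i1 j = (if a j ≤ (i : ℕ) + 1 ∧ (i : ℕ) + 1 < b j then (1 : ℝ) else 0) := by
        simp [hC, hi1]
      rw [hCi, hCi1]
      simp only [Matrix.of_apply]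
      split_ifs <;> (try norm_num) <;> (exfalso; omega)
    · have hz : ∀ k ∈ Finset.univ, k ≠ i → D i k * C k j = 0 := by
        intro k _ hk
        have h1 : i ≠ k := fun h => hk h.symm
        have h2 : ¬((k : ℕ) = (i : ℕ) + 1) := by
          have := k.isLt
          omega
        simp [hD, h1, h2]
      rw [Finset.sum_eq_single i (fun k hk hki => hz k hk hki) (fun h => absurd (Finset.mem_univ i) h)]
      have hDii : D i i = 1 := by simp [hD]
      rw [hDii, one_mul]
      have hi : (i : ℕ) + 1 = N := by have := i.isLt; omega
      have hCij : C i j = (if a j ≤ (i : ℕ) ∧ (i : ℕ) < b j then (1 : ℝ) else 0) := rfl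
      rw [hCij]
      simp only [Matrix.of_apply]
      have := hbN j
      split_ifs <;> (try norm_num) <;> (exfalso; omega)
  have : C.det = (D * C).det := by
    rw [Matrix.det_mul, hdetD, one_mul]
  rw [this, hmul]
  exact inc_det N (fun j => if a j < b j then a j else 0) (fun j => if a j < b j then b j else 0)



/-- Determinant of the bordered matrix with a row of ones equals the determinant
of the matrix of differences with the zeroth column. -/
lemma border_det (d : ℕ) (v : Fin (d + 1) → Fin d → ℝ) :
    (Matrix.of fun i j : Fin (d + 1) =>
      (Fin.cases (1 : ℝ) (fun i' => v j i') i)).det =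
    (Matrix.of fun i j : Fin d => v j.succ i - v 0 i).det := by
  set B : Matrix (Fin (d + 1)) (Fin (d + 1)) ℝ := Matrix.of fun i j : Fin (d + 1) =>
    (Fin.cases (1 : ℝ) (fun i' => v j i') i) with hB
  set U : Matrix (Fin (d + 1)) (Fin (d + 1)) ℝ := Matrix.of fun j k : Fin (d + 1) =>
    (if j = k then (1 : ℝ) else if j = 0 then -1 else 0) with hU
  have hUtri : U.BlockTriangular id := by
    intro i k h
    have h1 : i ≠ k := by intro h'; subst h'; exact absurd h (lt_irrefl _)
    have h2 : i ≠ 0 := by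
      intro h'
      subst h'
      exact absurd h (by simp [Fin.le_def])
    simp [hU, h1, h2]
  have hdetU : U.det = 1 := by
    rw [Matrix.det_of_upperTriangular hUtri]
    apply Finset.prod_eq_one
    intro i _
    simp [hU]
  have hBU : ∀ (i k : Fin (d + 1)), (B * U) i k =
      if k = 0 then B i 0 else B i k - B i 0 := by
    intro i k
    rw [Matrix.mul_apply]
    by_cases hk : k = 0
    · subst hk
      rw [if_pos rfl]
      rw [Finset.sum_eq_single 0]
      · simp [hU]
      · intro j _ hj
        have h2 : j ≠ (0 : Fin (d + 1)) := hj
        simp [hU, hj, h2]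
      · intro h; exact absurd (Finset.mem_univ _) h
    · rw [if_neg hk]
      have hz : ∀ j ∈ Finset.univ, j ∉ ({k, 0} : Finset (Fin (d + 1))) → B i j * U j k = 0 := by
        intro j _ hj
        simp only [Finset.mem_insert, Finset.mem_singleton] at hj
        push_neg at hj
        simp [hU, hj.1, hj.2]
      rw [← Finset.sum_subset (Finset.subset_univ ({k, 0} : Finset (Fin (d + 1)))) hz,
        Finset.sum_pair hk]
      have h1 : U k k = 1 := by simp [hU]
      have h2 : U 0 k = -1 := by
        have : (0 : Fin (d + 1)) ≠ k := fun h => hk h.symm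
        simp [hU, this]
      rw [h1, h2]
      ring
  have hdet : B.det = (B * U).det := by rw [Matrix.det_mul, hdetU, mul_one]
  rw [hdet, Matrix.det_succ_row_zero]
  rw [Finset.sum_eq_single 0]
  · have h00 : (B * U) 0 0 = 1 := by
      rw [hBU]
      simp [hB]
    rw [h00]
    have hsub : ((B * U).submatrix Fin.succ (0 : Fin (d + 1)).succAbove) =
        Matrix.of fun i j : Fin d => v j.succ i - v 0 i := by
      ext i j
      rw [Matrix.submatrix_apply, Fin.succAbove_zero, hBU]
      have : (Fin.succ j) ≠ 0 := Fin.succ_ne_zero j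
      rw [if_neg this]
      simp [hB]
    rw [hsub]
    simp
  · intro k _ hk
    have hk0 : (B * U) 0 k = 0 := by
      rw [hBU, if_neg hk]
      simp [hB]
    rw [hk0]
    ring
  · intro h; exact absurd (Finset.mem_univ _) h

section Snake
variable (n : ℕ) (w : ℕ → Letter)

/-- The word turns at position `m`. -/
def sTurn (m : ℕ) : Prop := (m = 1 ∧ w 1 = Letter.L) ∨ (2 ≤ m ∧ w (m - 1) ≠ w m)

instance sTurn.dec (m : ℕ) : Decidable (sTurn w m) := by unfold sTurn; infer_instance

lemma snakeSide_pos {m : ℕ} (h : sTurn w m) : snakeSide w m = 2 * m - 1 := if_pos h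
lemma snakeSide_neg {m : ℕ} (h : ¬sTurn w m) : snakeSide w m = 2 * m := if_neg h

/-- Largest turn position `≤ m` (or `0`). -/
def kstar : ℕ → ℕ
  | 0 => 0
  | m + 1 => if sTurn w (m + 1) then m + 1 else kstar m

lemma kstar_succ (m : ℕ) : kstar w (m + 1) = if sTurn w (m + 1) then m + 1 else kstar w m := rfl

lemma kstar_le : ∀ m, kstar w m ≤ m := by
  intro m
  induction m with
  | zero => simp [kstar]
  | succ m ih => rw [kstar_succ]; split_ifs <;> omega

/-- The elements `1, 2, 4, 6, 8, …` of the middle part of `Q_w`. -/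
def gElt (u : ℕ) : ℕ := if u = 0 then 1 else 2 * u

lemma gElt_succ (u : ℕ) : gElt (u + 1) = 2 * u + 2 := by simp [gElt]; omega

/-- The side (left = `True`) on which the element `gElt u` lives. -/
def sdL (u : ℕ) : Prop := u = 0 ∨ (2 ≤ u ∧ w (u - 1) = Letter.L)

instance sdL.dec (u : ℕ) : Decidable (sdL w u) := by unfold sdL; infer_instance

lemma side_opp : ∀ m, 1 ≤ m → (sdL w (kstar w m) ↔ w m = Letter.R) := by
  intro m
  induction m with
  | zero => omega
  | succ m ih =>
    intro _
    rw [kstar_succ]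
    by_cases hm : m = 0
    · subst hm
      by_cases ht : sTurn w 1
      · rw [if_pos ht]
        have hw1 : w 1 = Letter.L := by
          rcases ht with ⟨_, h⟩ | ⟨h, _⟩
          · exact h
          · omega
        simp [sdL, hw1]
      · rw [if_neg ht]
        have hw1 : w 1 = Letter.R := by
          cases h : w 1
          · exact absurd (Or.inl ⟨rfl, h⟩) ht
          · rfl
        simp [sdL, hw1, kstar]
    · have hm1 : 1 ≤ m := by omega
      by_cases ht : sTurn w (m + 1)
      · rw [if_pos ht]
        have hne : w m ≠ w (m + 1) := by
          rcases ht with ⟨h, _⟩ | ⟨_, h⟩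
          · omega
          · simpa using h
        have : sdL w (m + 1) ↔ w m = Letter.L := by
          simp only [sdL]
          constructor
          · rintro (h | ⟨_, h⟩)
            · omega
            · simpa using h
          · intro h; exact Or.inr ⟨by omega, by simpa using h⟩
        rw [this]
        cases h1 : w m <;> cases h2 : w (m + 1) <;> simp_all
      · rw [if_neg ht]
        have heq : w m = w (m + 1) := by
          by_contra hne
          exact ht (Or.inr ⟨by omega, by simpa using hne⟩)
        rw [ih hm1, heq]

lemma sdL_ge2 {t : ℕ} (h : 2 ≤ t) : sdL w t ↔ w (t - 1) = Letter.L := by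
  simp only [sdL]
  constructor
  · rintro (h' | ⟨_, h'⟩)
    · omega
    · exact h'
  · intro h'; exact Or.inr ⟨h, h'⟩

lemma excl_side {t : ℕ} (h2 : 2 ≤ t) : sdL w (kstar w (t - 1)) ↔ ¬ sdL w t := by
  have h1 : 1 ≤ t - 1 := by omega
  have := side_opp w (t - 1) h1
  rw [this, sdL_ge2 w h2]
  cases h : w (t - 1) <;> simp

lemma odd_below : ∀ j, 1 ≤ j → j ≤ n + 1 → ∀ b, b ≤ 2 * j + 1 → SnakeLE n w (2 * j + 1) b := by
  intro j
  induction j with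
  | zero => omega
  | succ j ih =>
    intro _ hle b hb
    by_cases hj : j = 0
    · subst hj
      -- 2*1+1 = 3
      have h3 : 2 * 1 + 1 = 3 := by norm_num
      rw [h3]
      interval_cases b
      · exact Relation.ReflTransGen.head SnakeCov.cov31
          (Relation.ReflTransGen.single SnakeCov.cov10)
      · exact Relation.ReflTransGen.single SnakeCov.cov31
      · exact Relation.ReflTransGen.single SnakeCov.cov32
      · exact Relation.ReflTransGen.refl
    · have hj1 : 1 ≤ j := by omega
      have hjn : j ≤ n := by omega
      have heq : 2 * (j + 1) + 1 = 2 * j + 3 := by ring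
      rw [heq]
      by_cases hb1 : b = 2 * j + 3
      · subst hb1; exact Relation.ReflTransGen.refl
      · by_cases hb2 : b = 2 * j + 2
        · subst hb2; exact Relation.ReflTransGen.single (SnakeCov.covBot j hj1 hjn)
        · exact Relation.ReflTransGen.head (SnakeCov.covOdd j hj1 hjn)
            (ih hj1 (by omega) b (by omega))

lemma even_below : ∀ t, 2 ≤ t → t ≤ n + 1 → ∀ u, u < t → u ≠ kstar w (t - 1) →
    SnakeLE n w (gElt t) (gElt u) := by
  intro t
  induction t with
  | zero => omega
  | succ t ih =>
    intro h2 hle u hu hne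
    have ht1 : 1 ≤ t := by omega
    have htn : t ≤ n := by omega
    have hg : gElt (t + 1) = 2 * t + 2 := gElt_succ t
    have hks : kstar w (t + 1 - 1) = kstar w t := by norm_num
    rw [hks] at hne
    rw [hg]
    by_cases ht : sTurn w t
    · -- turn at t
      have hkt : kstar w t = t := by
        cases t with
        | zero => omega
        | succ t' => rw [kstar_succ, if_pos ht]
      rw [hkt] at hne
      have hu' : u ≤ t - 1 := by omega
      have hside : snakeSide w t = 2 * t - 1 := snakeSide_pos w ht
      have hstep : SnakeCov n w (2 * t + 2) (snakeSide w t) := SnakeCov.covSide t ht1 htn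
      rw [hside] at hstep
      apply Relation.ReflTransGen.head hstep
      by_cases hgu : gElt u = 2 * t - 1
      · rw [hgu]
      · have ht2 : 2 ≤ t := by
          by_contra h
          have : t = 1 := by omega
          subst this
          have : u = 0 := by omega
          subst this
          simp [gElt] at hgu
        have : 2 * t - 1 = 2 * (t - 1) + 1 := by omega
        rw [this]
        apply odd_below n w (t - 1) (by omega) (by omega)
        have : gElt u ≤ 2 * (t - 1) := by
          unfold gElt
          split_ifs <;> omega
        omega
    · -- straight at t
      have hside : snakeSide w t = 2 * t := snakeSide_neg w ht
      have hstep : SnakeCov n w (2 * t + 2) (snakeSide w t) := SnakeCov.covSide t ht1 htn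
      rw [hside] at hstep
      have hgt : gElt t = 2 * t := by unfold gElt; split_ifs <;> omega
      have hstep' : SnakeCov n w (2 * t + 2) (gElt t) := by rw [hgt]; exact hstep
      by_cases hut : u = t
      · subst hut
        exact Relation.ReflTransGen.single hstep'
      · have hkt : kstar w t = kstar w (t - 1) := by
          cases t with
          | zero => omega
          | succ t' => rw [kstar_succ, if_neg ht]; norm_num
        by_cases ht2 : 2 ≤ t
        · exact Relation.ReflTransGen.head hstep'
            (ih ht2 (by omega) u (by omega) (by rw [← hkt]; exact hne))
        · -- t = 1 : u < 1 so u = 0, but kstar w 1 = kstar w 0 = 0 = u, contradiction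
          exfalso
          have ht1' : t = 1 := by omega
          subst ht1'
          have : u = 0 := by omega
          subst this
          apply hne
          rw [hkt]
          rfl

lemma le_zero : ∀ a, a < 2 * n + 4 → SnakeLE n w a 0 := by
  intro a
  induction a using Nat.strong_induction_on with
  | _ a ih =>
    intro ha
    match a, ha with
    | 0, _ => exact Relation.ReflTransGen.refl
    | 1, _ => exact Relation.ReflTransGen.single SnakeCov.cov10
    | 2, _ => exact Relation.ReflTransGen.single SnakeCov.cov20
    | 3, _ => exact Relation.ReflTransGen.head SnakeCov.cov31 (ih 1 (by omega) (by omega))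
    | (a + 4), ha =>
      by_cases hpar : (a + 4) % 2 = 0
      · -- even : a + 4 = 2m + 2 with 1 ≤ m ≤ n
        obtain ⟨m, hm⟩ : ∃ m, a + 4 = 2 * m + 2 := ⟨(a + 2) / 2, by omega⟩
        have hm1 : 1 ≤ m := by omega
        have hmn : m ≤ n := by omega
        have hcov : SnakeCov n w (2 * m + 2) (snakeSide w m) := SnakeCov.covSide m hm1 hmn
        have hlt : snakeSide w m < 2 * m + 2 := snakeCov_lt hcov
        rw [hm]
        exact Relation.ReflTransGen.head hcov (ih (snakeSide w m) (by omega) (by omega))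
      · -- odd : a + 4 = 2m + 3 with 1 ≤ m ≤ n
        obtain ⟨m, hm⟩ : ∃ m, a + 4 = 2 * m + 3 := ⟨(a + 1) / 2, by omega⟩
        have hm1 : 1 ≤ m := by omega
        have hmn : m ≤ n := by omega
        rw [hm]
        exact Relation.ReflTransGen.head (SnakeCov.covOdd m hm1 hmn) (ih (2 * m + 1) (by omega) (by omega))

lemma min_le_aux : ∀ k b, b < 2 * n + 4 → 2 * n + 3 ≤ b + k → SnakeLE n w (2 * n + 3) b := by
  intro k
  induction k with
  | zero =>
    intro b hb hk
    have : b = 2 * n + 3 := by omega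
    rw [this]
    exact Relation.ReflTransGen.refl
  | succ k ih =>
    intro b hb hk
    by_cases hbeq : b = 2 * n + 3
    · rw [hbeq]; exact Relation.ReflTransGen.refl
    · have hblt : b < 2 * n + 3 := by omega
      match b, hblt with
      | 0, _ => exact Relation.ReflTransGen.tail (ih 1 (by omega) (by omega)) SnakeCov.cov10
      | 1, _ => exact Relation.ReflTransGen.tail (ih 3 (by omega) (by omega)) SnakeCov.cov31
      | 2, _ => exact Relation.ReflTransGen.tail (ih 3 (by omega) (by omega)) SnakeCov.cov32
      | (b + 3), hblt =>
        by_cases hpar : (b + 3) % 2 = 1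
        · -- odd : b + 3 = 2m+1, 1 ≤ m ≤ n
          obtain ⟨m, hm⟩ : ∃ m, b + 3 = 2 * m + 1 := ⟨(b + 2) / 2, by omega⟩
          have hm1 : 1 ≤ m := by omega
          have hmn : m ≤ n := by omega
          rw [hm]
          exact Relation.ReflTransGen.tail (ih (2 * m + 3) (by omega) (by omega))
            (SnakeCov.covOdd m hm1 hmn)
        · -- even : b + 3 = 2m+2, 1 ≤ m ≤ n
          obtain ⟨m, hm⟩ : ∃ m, b + 3 = 2 * m + 2 := ⟨(b + 1) / 2, by omega⟩
          have hm1 : 1 ≤ m := by omega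
          have hmn : m ≤ n := by omega
          rw [hm]
          exact Relation.ReflTransGen.tail (ih (2 * m + 3) (by omega) (by omega))
            (SnakeCov.covBot m hm1 hmn)

lemma min_le (b : ℕ) (hb : b < 2 * n + 4) : SnakeLE n w (2 * n + 3) b :=
  min_le_aux n w (2 * n + 3) b hb (by omega)


/-! ### Meet-irreducible elements -/

lemma hat_le_of_snakeLE {a b : SnakeHat n w} (ha : a.1 < 2 * n + 4) (hb : b.1 < 2 * n + 4)
    (h : SnakeLE n w a.1 b.1) : a ≤ b :=
  Or.inr (Or.inr ⟨ha, hb, h⟩)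

lemma mi_of_unique_cover (x c : SnakeHat n w) (hxc : x ≤ c) (hcx : c ≠ x)
    (hstep : ∀ y : SnakeHat n w, x ≤ y → y ≠ x → c ≤ y) : MeetIrred x := by
  constructor
  · intro htop
    exact hcx (le_antisymm (htop c) hxc)
  · intro y z hglb
    by_contra hcon
    push_neg at hcon
    obtain ⟨hxy, hxz⟩ := hcon
    have hylb : x ≤ y := hglb.1 (by simp)
    have hzlb : x ≤ z := hglb.1 (by simp)
    have hcy : c ≤ y := hstep y hylb (fun h => hxy h.symm)
    have hcz : c ≤ z := hstep z hzlb (fun h => hxz h.symm)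
    have hclb : c ∈ lowerBounds ({y, z} : Set (SnakeHat n w)) := by
      intro b hb
      rcases hb with rfl | hb
      · exact hcy
      · rw [Set.mem_singleton_iff] at hb
        subst hb
        exact hcz
    exact hcx (le_antisymm (hglb.2 hclb) hxc)

lemma mi_bot (x : SnakeHat n w) (hx : x.1 = 2 * n + 5) : MeetIrred x := by
  apply mi_of_unique_cover n w _ (⟨2 * n + 3, by omega⟩ : SnakeHat n w)
  · exact Or.inl hx
  · intro h
    have := congrArg Fin.val h
    simp [hx] at this
  · intro y _ hyx
    by_cases hy4 : y.1 = 2 * n + 4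
    · exact Or.inr (Or.inl hy4)
    · have hy5 : y.1 ≠ 2 * n + 5 := fun h => hyx (Fin.ext (by simp [h, hx]))
      have hy : y.1 < 2 * n + 4 := by have := y.2; omega
      exact Or.inr (Or.inr ⟨by show 2 * n + 3 < 2 * n + 4; omega, hy, min_le n w y.1 hy⟩)

lemma no_cov_zero : ∀ b, ¬ SnakeCov n w 0 b := by
  intro b h
  generalize hgen : (0 : ℕ) = a at h
  cases h <;> omega

lemma mi_zero (x : SnakeHat n w) (hx : x.1 = 0) : MeetIrred x := by
  apply mi_of_unique_cover n w _ (⟨2 * n + 4, by omega⟩ : SnakeHat n w)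
  · exact Or.inr (Or.inl rfl)
  · intro h
    have := congrArg Fin.val h
    simp [hx] at this
  · intro y hxy hyx
    rcases hxy with h5 | h4 | ⟨_, hy, hle⟩
    · exfalso; omega
    · exact Or.inr (Or.inl h4)
    · rcases Relation.ReflTransGen.cases_head hle with heq | ⟨b, hcov, _⟩
      · refine absurd (Fin.ext ?_) (fun h => hyx (h.symm))
        omega
      · rw [hx] at hcov
        exact absurd hcov (no_cov_zero n w b)

lemma mi_of_P_cover (x c : SnakeHat n w) (hx : x.1 < 2 * n + 4) (hc : c.1 < 2 * n + 4)
    (hcov : SnakeCov n w x.1 c.1)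
    (huniq : ∀ b, SnakeCov n w x.1 b → b = c.1) : MeetIrred x := by
  apply mi_of_unique_cover n w x c
  · exact Or.inr (Or.inr ⟨hx, hc, Relation.ReflTransGen.single hcov⟩)
  · intro h
    have h1 := snakeCov_lt hcov
    have := congrArg Fin.val h
    omega
  · intro y hxy hyx
    rcases hxy with h5 | h4 | ⟨_, hy, hle⟩
    · exfalso; omega
    · exact Or.inr (Or.inl h4)
    · rcases Relation.ReflTransGen.cases_head hle with heq | ⟨b, hcovb, hrest⟩
      · exact absurd (Fin.ext heq) (fun h => hyx h.symm)
      · rw [huniq b hcovb] at hrest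
        exact Or.inr (Or.inr ⟨hc, hy, hrest⟩)

lemma uniq_cov_one : ∀ b, SnakeCov n w 1 b → b = 0 := by
  intro b h
  generalize hgen : (1 : ℕ) = a at h
  cases h <;> omega

lemma uniq_cov_two : ∀ b, SnakeCov n w 2 b → b = 0 := by
  intro b h
  generalize hgen : (2 : ℕ) = a at h
  cases h <;> omega

lemma uniq_cov_even (t : ℕ) (h2 : 2 ≤ t) : ∀ b, SnakeCov n w (2 * t) b → b = snakeSide w (t - 1) := by
  intro b h
  generalize hgen : (2 * t : ℕ) = a at h
  cases h with
  | cov10 => omega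
  | cov20 => omega
  | cov31 => omega
  | cov32 => omega
  | covOdd m h1 hm => omega
  | covBot m h1 hm => omega
  | covSide m h1 hm =>
    have hmt : m = t - 1 := by omega
    rw [hmt]

lemma gElt_lt (t : ℕ) (ht : t ≤ n + 1) : gElt t < 2 * n + 4 := by
  unfold gElt; split_ifs <;> omega

lemma mi_g (x : SnakeHat n w) (t : ℕ) (ht : t ≤ n + 1) (hx : x.1 = gElt t) : MeetIrred x := by
  by_cases h0 : t = 0
  · subst h0
    have hx1 : x.1 = 1 := hx
    apply mi_of_P_cover n w x ⟨0, by omega⟩ (by omega) (by show (0:ℕ) < 2 * n + 4; omega) (by rw [hx1]; exact SnakeCov.cov10)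
    intro b hb
    rw [hx1] at hb
    exact uniq_cov_one n w b hb
  · by_cases h1 : t = 1
    · subst h1
      have hx1 : x.1 = 2 := hx
      apply mi_of_P_cover n w x ⟨0, by omega⟩ (by omega) (by show (0:ℕ) < 2 * n + 4; omega) (by rw [hx1]; exact SnakeCov.cov20)
      intro b hb
      rw [hx1] at hb
      exact uniq_cov_two n w b hb
    · have h2 : 2 ≤ t := by omega
      have hx1 : x.1 = 2 * t := by rw [hx]; unfold gElt; rw [if_neg h0]
      have hcov : SnakeCov n w (2 * t) (snakeSide w (t - 1)) := by
        have := SnakeCov.covSide (n := n) (w := w) (t - 1) (by omega) (by omega)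
        have heq : 2 * (t - 1) + 2 = 2 * t := by omega
        rwa [heq] at this
      have hside_lt : snakeSide w (t - 1) < 2 * t := snakeCov_lt hcov
      apply mi_of_P_cover n w x ⟨snakeSide w (t - 1), by omega⟩ (by omega)
        (by show snakeSide w (t - 1) < 2 * n + 4; omega) (by rw [hx1]; exact hcov)
      intro b hb
      rw [hx1] at hb
      exact uniq_cov_even n w t h2 b hb


/-! ### Enumeration of `Q_w` -/

def elN (i : Fin (n + 4)) : ℕ :=
  if i.1 = 0 then 2 * n + 5 else if i.1 = 1 then 0 else gElt (i.1 - 2)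

lemma elN_lt (i : Fin (n + 4)) : elN n i < 2 * n + 6 := by
  unfold elN
  split_ifs with h0 h1
  · omega
  · omega
  · have := gElt_lt n (i.1 - 2) (by have := i.2; omega)
    omega

lemma elN_val0 {i : Fin (n + 4)} (h : i.1 = 0) : elN n i = 2 * n + 5 := by
  simp [elN, h]

lemma elN_val1 {i : Fin (n + 4)} (h : i.1 = 1) : elN n i = 0 := by
  simp [elN, h]

lemma elN_val2 {i : Fin (n + 4)} (h : 2 ≤ i.1) : elN n i = gElt (i.1 - 2) := by
  unfold elN
  rw [if_neg (by omega), if_neg (by omega)]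

def hatMk (v : ℕ) (h : v < 2 * n + 6) : SnakeHat n w := ⟨v, h⟩

lemma mi_elN (i : Fin (n + 4)) : MeetIrred (hatMk n w (elN n i) (elN_lt n i)) := by
  by_cases h0 : i.1 = 0
  · exact mi_bot n w _ (elN_val0 n h0)
  · by_cases h1 : i.1 = 1
    · exact mi_zero n w _ (elN_val1 n h1)
    · exact mi_g n w _ (i.1 - 2) (by have := i.2; omega) (elN_val2 n (i := i) (by omega))

def elQ (i : Fin (n + 4)) : SnakeQ n w := ⟨hatMk n w (elN n i) (elN_lt n i), mi_elN n w i⟩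

lemma gElt_inj {s t : ℕ} (h : gElt s = gElt t) : s = t := by
  unfold gElt at h
  split_ifs at h <;> omega

lemma elN_inj : Function.Injective (elN n) := by
  intro i j hij
  apply Fin.ext
  have hgb : ∀ t : ℕ, 1 ≤ gElt t ∧ gElt t ≤ 2 * t + 1 := by
    intro t; unfold gElt; split_ifs <;> omega
  unfold elN at hij
  have hi2 := hgb (i.1 - 2)
  have hj2 := hgb (j.1 - 2)
  split_ifs at hij <;> try omega
  · have := gElt_inj hij
    omega

lemma elQ_inj : Function.Injective (elQ n w) := by
  intro i j hij
  apply elN_inj n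
  have := congrArg (fun q : SnakeQ n w => q.1.1) hij
  exact this

lemma elQ_le_of {i j : Fin (n + 4)} (h : SnakeHatLE n w (elN n i) (elN n j)) :
    elQ n w i ≤ elQ n w j := h

/-! ### Positions -/

def lcnt : ℕ := ((Finset.range (n + 2)).filter (fun v => sdL w v)).card

def cA (t : ℕ) : ℕ := ((Finset.range (n + 2)).filter (fun v => sdL w v ∧ t < v)).card

def cB (t : ℕ) : ℕ := ((Finset.range (n + 2)).filter (fun v => ¬ sdL w v ∧ v < t)).card

lemma lcnt_le : lcnt n w ≤ n + 2 :=
  le_trans (Finset.card_filter_le _ _) (le_of_eq (Finset.card_range _))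

lemma cA_lt {t : ℕ} (ht : t < n + 2) (hs : sdL w t) : cA n w t < lcnt n w := by
  apply Finset.card_lt_card
  rw [Finset.ssubset_iff_of_subset]
  · refine ⟨t, ?_, ?_⟩
    · simp only [Finset.mem_filter, Finset.mem_range]
      exact ⟨ht, hs⟩
    · simp only [Finset.mem_filter, Finset.mem_range]
      intro h
      exact absurd h.2.2 (lt_irrefl t)
  · intro v hv
    simp only [Finset.mem_filter, Finset.mem_range] at hv ⊢
    exact ⟨hv.1, hv.2.1⟩

lemma cA_mono {t t' : ℕ} (h : t < t') (ht' : t' < n + 2) (hs' : sdL w t') :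
    cA n w t' < cA n w t := by
  apply Finset.card_lt_card
  rw [Finset.ssubset_iff_of_subset]
  · refine ⟨t', ?_, ?_⟩
    · simp only [Finset.mem_filter, Finset.mem_range]
      exact ⟨ht', hs', h⟩
    · simp only [Finset.mem_filter, Finset.mem_range]
      intro h'
      exact absurd h'.2.2 (lt_irrefl t')
  · intro v hv
    simp only [Finset.mem_filter, Finset.mem_range] at hv ⊢
    exact ⟨hv.1, hv.2.1, by omega⟩

lemma lcnt_add_r : lcnt n w + ((Finset.range (n + 2)).filter (fun v => ¬ sdL w v)).card = n + 2 := by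
  unfold lcnt
  rw [Finset.card_filter_add_card_filter_not]
  exact Finset.card_range _

lemma cB_lt {t : ℕ} (ht : t < n + 2) (hs : ¬ sdL w t) : lcnt n w + 3 + cB n w t ≤ n + 4 := by
  have h1 : cB n w t < ((Finset.range (n + 2)).filter (fun v => ¬ sdL w v)).card := by
    apply Finset.card_lt_card
    rw [Finset.ssubset_iff_of_subset]
    · refine ⟨t, ?_, ?_⟩
      · simp only [Finset.mem_filter, Finset.mem_range]
        exact ⟨ht, hs⟩
      · simp only [Finset.mem_filter, Finset.mem_range]
        intro h
        exact absurd h.2.2 (lt_irrefl t)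
    · intro v hv
      simp only [Finset.mem_filter, Finset.mem_range] at hv ⊢
      exact ⟨hv.1, hv.2.1⟩
  have h2 := lcnt_add_r n w
  omega

lemma cB_mono {t t' : ℕ} (h : t < t') (ht : t < n + 2) (hs : ¬ sdL w t) :
    cB n w t < cB n w t' := by
  apply Finset.card_lt_card
  rw [Finset.ssubset_iff_of_subset]
  · refine ⟨t, ?_, ?_⟩
    · simp only [Finset.mem_filter, Finset.mem_range]
      exact ⟨ht, hs, h⟩
    · simp only [Finset.mem_filter, Finset.mem_range]
      intro h'
      exact absurd h'.2.2 (lt_irrefl t)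
  · intro v hv
    simp only [Finset.mem_filter, Finset.mem_range] at hv ⊢
    exact ⟨hv.1, hv.2.1, by omega⟩

def posOf (i : Fin (n + 4)) : ℕ :=
  if i.1 = 0 then 0
  else if i.1 = 1 then lcnt n w + 1
  else if sdL w (i.1 - 2) then 1 + cA n w (i.1 - 2)
  else lcnt n w + 3 + cB n w (i.1 - 2)

lemma posOf_lt (i : Fin (n + 4)) : posOf n w i < n + 5 := by
  have hl := lcnt_le n w
  have hi := i.2
  unfold posOf
  split_ifs with h0 h1 hs
  · omega
  · omega
  · have := cA_lt n w (t := i.1 - 2) (by omega) hs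
    omega
  · have := cB_lt n w (t := i.1 - 2) (by omega) hs
    omega

lemma posOf_ne_star (i : Fin (n + 4)) : posOf n w i ≠ lcnt n w + 2 := by
  have hi := i.2
  unfold posOf
  split_ifs with h0 h1 hs
  · omega
  · omega
  · have := cA_lt n w (t := i.1 - 2) (by omega) hs
    omega
  · omega

lemma posOf_inj : Function.Injective (posOf n w) := by
  intro i j h
  apply Fin.ext
  have hi := i.2
  have hj := j.2
  unfold posOf at h
  have hl := lcnt_le n w
  by_cases h0i : i.1 = 0 <;> by_cases h0j : j.1 = 0
  · omega
  · -- i = 0, j ≠ 0 : pos i = 0, pos j ≥ 1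
    exfalso
    rw [if_pos h0i] at h
    by_cases h1j : j.1 = 1
    · rw [if_neg h0j, if_pos h1j] at h; omega
    · rw [if_neg h0j, if_neg h1j] at h
      split_ifs at h <;> omega
  · exfalso
    rw [if_pos h0j] at h
    by_cases h1i : i.1 = 1
    · rw [if_neg h0i, if_pos h1i] at h; omega
    · rw [if_neg h0i, if_neg h1i] at h
      split_ifs at h <;> omega
  · rw [if_neg h0i, if_neg h0j] at h
    by_cases h1i : i.1 = 1 <;> by_cases h1j : j.1 = 1
    · omega
    · -- i = 1 : pos = lcnt+1 ; j is a g-element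
      exfalso
      rw [if_pos h1i, if_neg h1j] at h
      split_ifs at h with hs
      · have := cA_lt n w (t := j.1 - 2) (by omega) hs
        omega
      · omega
    · exfalso
      rw [if_neg h1i, if_pos h1j] at h
      split_ifs at h with hs
      · have := cA_lt n w (t := i.1 - 2) (by omega) hs
        omega
      · omega
    · rw [if_neg h1i, if_neg h1j] at h
      split_ifs at h with hsi hsj hsj
      · -- both left
        rcases Nat.lt_trichotomy (i.1 - 2) (j.1 - 2) with hlt | heq | hgt
        · have := cA_mono n w hlt (by omega) hsj; omega
        · omega
        · have := cA_mono n w hgt (by omega) hsi; omega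
      · -- left vs right
        exfalso
        have := cA_lt n w (t := i.1 - 2) (by omega) hsi
        omega
      · exfalso
        have := cA_lt n w (t := j.1 - 2) (by omega) hsj
        omega
      · -- both right
        rcases Nat.lt_trichotomy (i.1 - 2) (j.1 - 2) with hlt | heq | hgt
        · have := cB_mono n w hlt (by omega) hsi; omega
        · omega
        · have := cB_mono n w hgt (by omega) hsj; omega


/-! ### Filters are intervals -/

lemma posOf_val0 {i : Fin (n + 4)} (h : i.1 = 0) : posOf n w i = 0 := by
  unfold posOf; rw [if_pos h]

lemma posOf_val1 {i : Fin (n + 4)} (h : i.1 = 1) : posOf n w i = lcnt n w + 1 := by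
  unfold posOf; rw [if_neg (by omega), if_pos h]

lemma posOf_val2L {i : Fin (n + 4)} (h2 : 2 ≤ i.1) (hs : sdL w (i.1 - 2)) :
    posOf n w i = 1 + cA n w (i.1 - 2) := by
  unfold posOf; rw [if_neg (by omega), if_neg (by omega), if_pos hs]

lemma posOf_val2R {i : Fin (n + 4)} (h2 : 2 ≤ i.1) (hs : ¬ sdL w (i.1 - 2)) :
    posOf n w i = lcnt n w + 3 + cB n w (i.1 - 2) := by
  unfold posOf; rw [if_neg (by omega), if_neg (by omega), if_neg hs]

lemma elQ_le_zeroElt (i : Fin (n + 4)) (h : i.1 ≠ 0) :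
    elQ n w i ≤ elQ n w ⟨1, by omega⟩ := by
  apply elQ_le_of
  rw [elN_val1 n (i := ⟨1, by omega⟩) rfl]
  by_cases h1 : i.1 = 1
  · rw [elN_val1 n h1]
    exact Or.inr (Or.inr ⟨by omega, by omega, Relation.ReflTransGen.refl⟩)
  · rw [elN_val2 n (by omega)]
    have hg := gElt_lt n (i.1 - 2) (by have := i.2; omega)
    exact Or.inr (Or.inr ⟨by omega, by omega, le_zero n w _ (by omega)⟩)

lemma elQ_g_le (t t' : ℕ) (ht : t ≤ n + 1) (h2 : 2 ≤ t) (h' : t' < t)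
    (hne : t' ≠ kstar w (t - 1)) :
    elQ n w ⟨t + 2, by omega⟩ ≤ elQ n w ⟨t' + 2, by omega⟩ := by
  apply elQ_le_of
  rw [elN_val2 n (i := ⟨t + 2, by omega⟩) (by simp), elN_val2 n (i := ⟨t' + 2, by omega⟩) (by simp)]
  have e1 : (t + 2) - 2 = t := by omega
  have e2 : (t' + 2) - 2 = t' := by omega
  simp only []
  rw [e1, e2]
  have hb1 := gElt_lt n t ht
  have hb2 := gElt_lt n t' (by omega)
  exact Or.inr (Or.inr ⟨by omega, by omega, even_below n w t h2 ht t' h' hne⟩)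

lemma filter_interval (A : Set (SnakeQ n w))
    (hup : ∀ a ∈ A, ∀ b, a ≤ b → b ∈ A) :
    ∃ a b : ℕ, b ≤ n + 5 ∧ a ≤ lcnt n w + 2 ∧ lcnt n w + 2 < b ∧
      ∀ i : Fin (n + 4), (elQ n w i ∈ A ↔ a ≤ posOf n w i ∧ posOf n w i < b) := by
  classical
  have hl := lcnt_le n w
  by_cases hbot : elQ n w ⟨0, by omega⟩ ∈ A
  · refine ⟨0, n + 5, le_refl _, by omega, by omega, ?_⟩
    intro i
    constructor
    · intro _
      exact ⟨Nat.zero_le _, posOf_lt n w i⟩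
    · intro _
      apply hup _ hbot
      apply elQ_le_of
      rw [elN_val0 n (i := ⟨0, by omega⟩) rfl]
      exact Or.inl rfl
  · by_cases hne : ∃ i : Fin (n + 4), elQ n w i ∈ A
    · obtain ⟨i0, hi0⟩ := hne
      have hi0ne : i0.1 ≠ 0 := by
        intro h
        exact hbot (by rwa [show (⟨0, by omega⟩ : Fin (n + 4)) = i0 from Fin.ext (by first | omega | (simp only [Fin.val_mk]; omega))])
      have hzeroA : elQ n w ⟨1, by omega⟩ ∈ A := hup _ hi0 _ (elQ_le_zeroElt n w i0 hi0ne)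
      set P : ℕ → Prop := fun t => sdL w t ∧ ∃ i : Fin (n + 4), i.1 = t + 2 ∧ elQ n w i ∈ A
        with hPdef
      set Q : ℕ → Prop := fun t => ¬ sdL w t ∧ ∃ i : Fin (n + 4), i.1 = t + 2 ∧ elQ n w i ∈ A
        with hQdef
      have hclos : ∀ t t', (∃ i : Fin (n + 4), i.1 = t + 2 ∧ elQ n w i ∈ A) → t ≤ n + 1 →
          t' < t → 2 ≤ t → t' ≠ kstar w (t - 1) →
          (∃ i : Fin (n + 4), i.1 = t' + 2 ∧ elQ n w i ∈ A) := by
        intro t t' ⟨i, hiv, hiA⟩ htn h' h2 hnek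
        have hieq : i = ⟨t + 2, by omega⟩ := Fin.ext (by first | omega | (simp only [Fin.val_mk]; omega))
        rw [hieq] at hiA
        exact ⟨⟨t' + 2, by omega⟩, rfl, hup _ hiA _ (elQ_g_le n w t t' htn h2 h' hnek)⟩
      have hclosL : ∀ t t', P t → t ≤ n + 1 → t' ≤ t → sdL w t' → P t' := by
        intro t t' hPt htn h' hs'
        rcases eq_or_lt_of_le h' with rfl | hlt
        · exact hPt
        · have h2 : 2 ≤ t := by
            rcases hPt.1 with h | ⟨h, _⟩ <;> omega
          have hnek : t' ≠ kstar w (t - 1) := by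
            intro hk
            have := (excl_side w h2).mp (by rwa [← hk])
            exact this hPt.1
          exact ⟨hs', hclos t t' hPt.2 htn hlt h2 hnek⟩
      have hclosR : ∀ t t', Q t → t ≤ n + 1 → t' ≤ t → ¬ sdL w t' → Q t' := by
        intro t t' hQt htn h' hs'
        rcases eq_or_lt_of_le h' with rfl | hlt
        · exact hQt
        · have h2 : 2 ≤ t := by
            by_contra h
            have ht1 : t = 1 := by omega
            have : t' = 0 := by omega
            exact hs' (by rw [this]; exact Or.inl rfl)
          have hnek : t' ≠ kstar w (t - 1) := by
            intro hk
            have := (excl_side w h2).mpr hQt.1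
            rw [← hk] at this
            exact hs' this
          exact ⟨hs', hclos t t' hQt.2 htn hlt h2 hnek⟩
      -- left bound
      have hLeft : ∃ a : ℕ, 1 ≤ a ∧ a ≤ lcnt n w + 1 ∧
          ∀ i : Fin (n + 4), 2 ≤ i.1 → sdL w (i.1 - 2) →
            (elQ n w i ∈ A ↔ a ≤ posOf n w i) := by
        by_cases hPL : ∃ t, t ≤ n + 1 ∧ P t
        · obtain ⟨t0, ht0, hP0⟩ := hPL
          set tL := Nat.findGreatest P (n + 1) with htLdef
          have hPtL : P tL := Nat.findGreatest_spec ht0 hP0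
          have htLle : tL ≤ n + 1 := Nat.findGreatest_le _
          have hcAtL := cA_lt n w (t := tL) (by omega) hPtL.1
          refine ⟨1 + cA n w tL, by omega, by omega, ?_⟩
          intro i h2 hs
          have hit : i.1 - 2 ≤ n + 1 := by have := i.2; omega
          rw [posOf_val2L n w h2 hs]
          constructor
          · intro hiA
            have hPt : P (i.1 - 2) := ⟨hs, i, by omega, hiA⟩
            have hle : i.1 - 2 ≤ tL := Nat.le_findGreatest hit hPt
            rcases eq_or_lt_of_le hle with heq | hlt
            · rw [← heq]
            · have := cA_mono n w hlt (by omega) hPtL.1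
              omega
          · intro hge
            have htle : i.1 - 2 ≤ tL := by
              by_contra hgt
              push_neg at hgt
              have := cA_mono n w hgt (by omega) hs
              omega
            obtain ⟨_, i', hi'v, hi'A⟩ := hclosL tL (i.1 - 2) hPtL htLle htle hs
            have : i' = i := Fin.ext (by first | omega | (simp only [Fin.val_mk]; omega))
            rwa [this] at hi'A
        · push_neg at hPL
          refine ⟨lcnt n w + 1, by omega, le_refl _, ?_⟩
          intro i h2 hs
          have hit : i.1 - 2 ≤ n + 1 := by have := i.2; omega
          rw [posOf_val2L n w h2 hs]
          have hcAt := cA_lt n w (t := i.1 - 2) (by omega) hs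
          constructor
          · intro hiA
            exact absurd (⟨hs, i, by omega, hiA⟩ : P (i.1 - 2)) (hPL _ hit)
          · intro hge
            omega
      -- right bound
      have hRight : ∃ b : ℕ, lcnt n w + 3 ≤ b ∧ b ≤ n + 5 ∧
          ∀ i : Fin (n + 4), 2 ≤ i.1 → ¬ sdL w (i.1 - 2) →
            (elQ n w i ∈ A ↔ posOf n w i < b) := by
        by_cases hQR : ∃ t, t ≤ n + 1 ∧ Q t
        · obtain ⟨t0, ht0, hQ0⟩ := hQR
          set tR := Nat.findGreatest Q (n + 1) with htRdef
          have hQtR : Q tR := Nat.findGreatest_spec ht0 hQ0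
          have htRle : tR ≤ n + 1 := Nat.findGreatest_le _
          have hcBtR := cB_lt n w (t := tR) (by omega) hQtR.1
          refine ⟨lcnt n w + 4 + cB n w tR, by omega, by omega, ?_⟩
          intro i h2 hs
          have hit : i.1 - 2 ≤ n + 1 := by have := i.2; omega
          rw [posOf_val2R n w h2 hs]
          constructor
          · intro hiA
            have hQt : Q (i.1 - 2) := ⟨hs, i, by omega, hiA⟩
            have hle : i.1 - 2 ≤ tR := Nat.le_findGreatest hit hQt
            rcases eq_or_lt_of_le hle with heq | hlt
            · rw [heq]
              omega
            · have := cB_mono n w hlt (by omega) hs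
              omega
          · intro hge
            have htle : i.1 - 2 ≤ tR := by
              by_contra hgt
              push_neg at hgt
              have := cB_mono n w hgt (by omega) hQtR.1
              omega
            obtain ⟨_, i', hi'v, hi'A⟩ := hclosR tR (i.1 - 2) hQtR htRle htle hs
            have : i' = i := Fin.ext (by first | omega | (simp only [Fin.val_mk]; omega))
            rwa [this] at hi'A
        · push_neg at hQR
          refine ⟨lcnt n w + 3, le_refl _, by omega, ?_⟩
          intro i h2 hs
          have hit : i.1 - 2 ≤ n + 1 := by have := i.2; omega
          rw [posOf_val2R n w h2 hs]
          constructor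
          · intro hiA
            exact absurd (⟨hs, i, by omega, hiA⟩ : Q (i.1 - 2)) (hQR _ hit)
          · intro hge
            omega
      obtain ⟨a, ha1, ha2, hLiff⟩ := hLeft
      obtain ⟨b, hb1, hb2, hRiff⟩ := hRight
      refine ⟨a, b, hb2, by omega, by omega, ?_⟩
      intro i
      by_cases h0 : i.1 = 0
      · rw [posOf_val0 n w h0]
        constructor
        · intro hiA
          exact absurd (by rwa [show i = (⟨0, by omega⟩ : Fin (n + 4)) from Fin.ext (by first | omega | (simp only [Fin.val_mk]; omega))] at hiA) hbot
        · intro h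
          omega
      · by_cases h1 : i.1 = 1
        · rw [posOf_val1 n w h1]
          constructor
          · intro _
            exact ⟨by omega, by omega⟩
          · intro _
            rwa [show i = (⟨1, by omega⟩ : Fin (n + 4)) from Fin.ext (by first | omega | (simp only [Fin.val_mk]; omega))]
        · have h2 : 2 ≤ i.1 := by omega
          by_cases hs : sdL w (i.1 - 2)
          · have hiff := hLiff i h2 hs
            have hb : posOf n w i < b := by
              rw [posOf_val2L n w h2 hs]
              have := cA_lt n w (t := i.1 - 2) (by have := i.2; omega) hs
              omega
            rw [hiff]
            exact ⟨fun h => ⟨h, hb⟩, fun h => h.1⟩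
          · have hiff := hRiff i h2 hs
            have haa : a ≤ posOf n w i := by
              rw [posOf_val2R n w h2 hs]
              omega
            rw [hiff]
            exact ⟨fun h => ⟨haa, h⟩, fun h => h.2⟩
    · push_neg at hne
      refine ⟨lcnt n w + 2, lcnt n w + 3, by omega, le_refl _, by omega, ?_⟩
      intro i
      constructor
      · intro hiA
        exact absurd hiA (hne i)
      · intro ⟨hh1, hh2⟩
        exact absurd (by omega : posOf n w i = lcnt n w + 2) (posOf_ne_star n w i)


end Snake

theorem stmt15 (n : ℕ) (w : ℕ → Letter) (hw : InV n w)
    (u : Fin (n + 5) → SnakeQ n w → ℝ)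
    (hu : ∀ i, u i ∈ OPVertexSet (SnakeQ n w))
    (hind : AffineIndependent ℝ u)
    (e : SnakeQ n w ≃ Fin (n + 4)) :
    (Matrix.of fun i j : Fin (n + 4) => (u j.succ - u 0) (e.symm i)).det = 1 ∨
      (Matrix.of fun i j : Fin (n + 4) => (u j.succ - u 0) (e.symm i)).det = -1 := by
  classical
  set M : Matrix (Fin (n + 4)) (Fin (n + 4)) ℝ :=
    Matrix.of fun i j : Fin (n + 4) => (u j.succ - u 0) (e.symm i) with hMdef
  -- Step 1 : the determinant is nonzero
  have hli : LinearIndependent ℝ (fun j : Fin (n + 4) => u j.succ - u 0) := by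
    have h := (affineIndependent_iff_linearIndependent_vsub ℝ u 0).mp hind
    have hcomp := h.comp
      (fun j : Fin (n + 4) => (⟨j.succ, Fin.succ_ne_zero j⟩ : {x : Fin (n + 5) // x ≠ 0}))
      (fun j k hjk => by
        have := congrArg Subtype.val hjk
        exact Fin.succ_injective _ this)
    exact hcomp
  have hdet0 : M.det ≠ 0 := by
    intro h0
    obtain ⟨c, hc0, hmc⟩ := Matrix.exists_mulVec_eq_zero_iff.mpr h0
    have hsum : (∑ j : Fin (n + 4), c j • (u j.succ - u 0)) = 0 := by
      funext q
      have hq := congrFun hmc (e q)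
      simp only [Matrix.mulVec, dotProduct, Matrix.of_apply, Pi.zero_apply, hMdef] at hq
      rw [Equiv.symm_apply_apply] at hq
      simp only [Finset.sum_apply, Pi.smul_apply, smul_eq_mul, Pi.zero_apply]
      rw [← hq]
      apply Finset.sum_congr rfl
      intro j _
      ring
    have hall := Fintype.linearIndependent_iff.mp hli c hsum
    exact hc0 (funext fun j => hall j)
  -- Step 2 : the enumeration equivalence
  haveI : Finite (SnakeQ n w) := Finite.intro e
  have hcard : Nat.card (SnakeQ n w) = n + 4 := Nat.card_eq_of_equiv_fin e
  have hbij : Function.Bijective (elQ n w) := by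
    rw [Nat.bijective_iff_injective_and_card]
    refine ⟨elQ_inj n w, ?_⟩
    simp [hcard, Nat.card_eq_fintype_card]
  set EQV : Fin (n + 4) ≃ SnakeQ n w := Equiv.ofBijective _ hbij with hEQV
  -- Step 3 : the bordered matrix and the row permutation
  set B : Matrix (Fin (n + 5)) (Fin (n + 5)) ℝ := Matrix.of fun i j : Fin (n + 5) =>
    (Fin.cases (1 : ℝ) (fun i' => u j (e.symm i')) i) with hBdef
  have hBM : B.det = M.det := border_det (n + 4) (fun j i' => u j (e.symm i'))
  have hstar_lt : lcnt n w + 2 < n + 5 := by have := lcnt_le n w; omega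
  set τ : Fin (n + 5) → Fin (n + 5) := fun q =>
    Fin.cases ⟨lcnt n w + 2, hstar_lt⟩
      (fun i' => ⟨posOf n w (EQV.symm (e.symm i')), posOf_lt n w _⟩) q with hτdef
  have hτ0 : τ 0 = ⟨lcnt n w + 2, hstar_lt⟩ := rfl
  have hτs : ∀ x : Fin (n + 4), τ x.succ = ⟨posOf n w (EQV.symm (e.symm x)), posOf_lt n w _⟩ := by
    intro x
    simp only [hτdef, Fin.cases_succ]
  have hτinj : Function.Injective τ := by
    intro q q' h
    rcases Fin.eq_zero_or_eq_succ q with rfl | ⟨x, rfl⟩ <;>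
      rcases Fin.eq_zero_or_eq_succ q' with rfl | ⟨y, rfl⟩
    · rfl
    · exfalso
      rw [hτ0, hτs y] at h
      have := congrArg Fin.val h
      simp only [Fin.val_mk] at this
      exact posOf_ne_star n w _ this.symm
    · exfalso
      rw [hτ0, hτs x] at h
      have := congrArg Fin.val h
      simp only [Fin.val_mk] at this
      exact posOf_ne_star n w _ this
    · rw [hτs x, hτs y] at h
      have := congrArg Fin.val h
      simp only [Fin.val_mk] at this
      have h1 := posOf_inj n w this
      have h2 := EQV.symm.injective h1
      have h3 := e.symm.injective h2
      rw [h3]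
  have hτbij : Function.Bijective τ := Finite.injective_iff_bijective.mp hτinj
  set σE : Equiv.Perm (Fin (n + 5)) := Equiv.ofBijective τ hτbij with hσE
  -- Step 4 : filters and intervals
  have hu' : ∀ i, ∃ A : Set (SnakeQ n w), (∀ a ∈ A, ∀ b, a ≤ b → b ∈ A) ∧
      u i = A.indicator fun _ => (1 : ℝ) := hu
  choose A hAup hAind using hu'
  have hint := fun j => filter_interval n w (A j) (hAup j)
  choose aF bF hbF haF hstarF hiffF using hint
  have hPmat : (B.submatrix ⇑σE.symm id) = Matrix.of fun p j : Fin (n + 5) =>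
      (if aF j ≤ (p : ℕ) ∧ (p : ℕ) < bF j then (1 : ℝ) else 0) := by
    ext p j
    have hkey : ∀ q : Fin (n + 5), B q j =
        (if aF j ≤ ((τ q : Fin (n + 5)) : ℕ) ∧ ((τ q : Fin (n + 5)) : ℕ) < bF j
          then (1 : ℝ) else 0) := by
      intro q
      rcases Fin.eq_zero_or_eq_succ q with rfl | ⟨x, rfl⟩
      · rw [hτ0]
        have hB0 : B 0 j = 1 := by simp [hBdef]
        rw [hB0, if_pos]
        simp only [Fin.val_mk]
        exact ⟨haF j, hstarF j⟩
      · rw [hτs x]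
        have hBx : B x.succ j = u j (e.symm x) := by simp [hBdef]
        rw [hBx, hAind j]
        have helq : elQ n w (EQV.symm (e.symm x)) = e.symm x := by
          have : EQV (EQV.symm (e.symm x)) = e.symm x := EQV.apply_symm_apply _
          exact this
        rw [Set.indicator_apply]
        simp only [Fin.val_mk]
        have hiff2 := hiffF j (EQV.symm (e.symm x))
        rw [helq] at hiff2
        exact if_congr hiff2 rfl rfl
    rw [Matrix.submatrix_apply, id_eq, hkey (σE.symm p)]
    have : τ (σE.symm p) = p := σE.apply_symm_apply p
    rw [this]
    rfl
  -- Step 5 : put everything together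
  have hperm : (B.submatrix ⇑σE.symm id).det = (((Equiv.Perm.sign σE.symm) : ℤ) : ℝ) * B.det :=
    Matrix.det_permute _ _
  have hintdet : (B.submatrix ⇑σE.symm id).det ∈ detSet := by
    rw [hPmat]
    exact interval_det (n + 5) aF bF hbF
  have hsign : (((Equiv.Perm.sign σE.symm) : ℤ) : ℝ) = 1 ∨ (((Equiv.Perm.sign σE.symm) : ℤ) : ℝ) = -1 := by
    rcases Int.units_eq_one_or (Equiv.Perm.sign σE.symm) with hs | hs <;> rw [hs] <;> simp
  have hMmem : M.det = 0 ∨ M.det = 1 ∨ M.det = -1 := by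
    simp only [detSet, Set.mem_insert_iff, Set.mem_singleton_iff] at hintdet
    rcases hsign with hs | hs <;> rw [hs] at hperm <;> rw [hBM] at hperm
    · rw [one_mul] at hperm
      rwa [← hperm]
    · rcases hintdet with h | h | h <;> rw [hperm] at h
      · left; linarith
      · right; right; linarith
      · right; left; linarith
  rcases hMmem with h | h | h
  · exact absurd h hdet0
  · left; exact h
  · right; exact h
end

section
/- Let n ≥ 1 and let w = εL^{n−1} be the generalized snake word of length n−1 all of whose letters are L (so w ∈ 𝒱). Then every circuit of the vertex set V(Q_w) of the order polytope O(Q_w) has exactly four elements, and the number of circuits of V(Q_w) equals binomial(n+1, 2). -/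
namespace Stmt16Aux

abbrev wL : ℕ → Letter := fun _ => Letter.L

theorem snakeSide_wL (m : ℕ) : snakeSide wL m = if m = 1 then 1 else 2 * m := by
  unfold snakeSide
  rcases eq_or_ne m 1 with h | h
  · subst h
    rw [if_pos (Or.inl ⟨rfl, rfl⟩), if_pos rfl]
  · have hc : ¬((m = 1 ∧ wL 1 = Letter.L) ∨ (2 ≤ m ∧ wL (m - 1) ≠ wL m)) := by
      rintro (⟨h1, _⟩ | ⟨_, h2⟩)
      · exact h h1
      · exact h2 rfl
    rw [if_neg hc, if_neg h]

def upRel (k a b : ℕ) : Prop :=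
  b = a ∨ (a = 1 ∧ b = 0) ∨ (a = 2 ∧ b = 0) ∨
  (a % 2 = 1 ∧ 3 ≤ a ∧ a ≤ 2*k+3 ∧ b < a) ∨
  (a % 2 = 0 ∧ 4 ≤ a ∧ a ≤ 2*k+2 ∧ (b = 0 ∨ b = 1 ∨ (b % 2 = 0 ∧ 4 ≤ b ∧ b < a)))

theorem snakeLE_upRel {k a b : ℕ} (h : SnakeLE k wL a b) : upRel k a b := by
  induction h with
  | refl => exact Or.inl rfl
  | tail hab hbc ih =>
    cases hbc with
    | cov10 => unfold upRel at ih ⊢; omega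
    | cov20 => unfold upRel at ih ⊢; omega
    | cov31 => unfold upRel at ih ⊢; omega
    | cov32 => unfold upRel at ih ⊢; omega
    | covOdd m h1 h2 => unfold upRel at ih ⊢; omega
    | covBot m h1 h2 => unfold upRel at ih ⊢; omega
    | covSide m h1 h2 =>
      rcases eq_or_ne m 1 with rfl | hm
      · rw [snakeSide_wL, if_pos rfl]; unfold upRel at ih ⊢; omega
      · rw [snakeSide_wL, if_neg hm]; unfold upRel at ih ⊢; omega

theorem upRel_snakeLE {k : ℕ} : ∀ a b, upRel k a b → SnakeLE k wL a b := by
  intro a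
  induction a using Nat.strong_induction_on with
  | _ a IH =>
    intro b h
    unfold upRel at h
    obtain rfl | ⟨rfl, rfl⟩ | ⟨rfl, rfl⟩ | ⟨ho, h3, hk, hb⟩ | ⟨he, h4, hk, hb⟩ := h
    · exact Relation.ReflTransGen.refl
    · exact Relation.ReflTransGen.head SnakeCov.cov10 Relation.ReflTransGen.refl
    · exact Relation.ReflTransGen.head SnakeCov.cov20 Relation.ReflTransGen.refl
    · -- a odd, 3 ≤ a ≤ 2k+3
      obtain ⟨m, rfl⟩ : ∃ m, a = 2*m+3 := ⟨(a-3)/2, by omega⟩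
      rcases Nat.eq_zero_or_pos m with rfl | hm
      · -- a = 3
        have : b = 0 ∨ b = 1 ∨ b = 2 := by omega
        rcases this with rfl | rfl | rfl
        · exact Relation.ReflTransGen.head SnakeCov.cov31
            (Relation.ReflTransGen.head SnakeCov.cov10 Relation.ReflTransGen.refl)
        · exact Relation.ReflTransGen.head SnakeCov.cov31 Relation.ReflTransGen.refl
        · exact Relation.ReflTransGen.head SnakeCov.cov32 Relation.ReflTransGen.refl
      · have hmk : m ≤ k := by omega
        rcases eq_or_ne b (2*m+2) with rfl | hb2
        · exact Relation.ReflTransGen.head (SnakeCov.covBot m hm hmk) Relation.ReflTransGen.refl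
        · refine Relation.ReflTransGen.head (SnakeCov.covOdd m hm hmk) (IH (2*m+1) (by omega) b ?_)
          unfold upRel; omega
    · -- a even, 4 ≤ a ≤ 2k+2
      obtain ⟨m, rfl⟩ : ∃ m, a = 2*m+2 := ⟨(a-2)/2, by omega⟩
      have hm : 1 ≤ m := by omega
      have hmk : m ≤ k := by omega
      rcases eq_or_ne m 1 with rfl | hm1
      · have hc : SnakeCov k wL 4 1 := by
          have h := SnakeCov.covSide (n := k) (w := wL) 1 le_rfl hmk
          rwa [snakeSide_wL, if_pos rfl] at h
        have : b = 0 ∨ b = 1 := by omega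
        rcases this with rfl | rfl
        · exact Relation.ReflTransGen.head hc
            (Relation.ReflTransGen.head SnakeCov.cov10 Relation.ReflTransGen.refl)
        · exact Relation.ReflTransGen.head hc Relation.ReflTransGen.refl
      · have hc : SnakeCov k wL (2*m+2) (2*m) := by
          have h := SnakeCov.covSide (n := k) (w := wL) m hm hmk
          rwa [snakeSide_wL, if_neg hm1] at h
        refine Relation.ReflTransGen.head hc (IH (2*m) (by omega) b ?_)
        unfold upRel; omega

theorem snakeLE_iff {k : ℕ} (a b : ℕ) : SnakeLE k wL a b ↔ upRel k a b :=
  ⟨snakeLE_upRel, upRel_snakeLE a b⟩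

def hatRel (k a b : ℕ) : Prop :=
  a = 2*k+5 ∨ b = 2*k+4 ∨ (a < 2*k+4 ∧ b < 2*k+4 ∧ upRel k a b)

theorem hatLE_iff {k : ℕ} (a b : ℕ) : SnakeHatLE k wL a b ↔ hatRel k a b := by
  unfold SnakeHatLE hatRel
  rw [snakeLE_iff]

theorem le_iff' {k : ℕ} (x y : SnakeHat k wL) : x ≤ y ↔ hatRel k x.1 y.1 :=
  hatLE_iff x.1 y.1

def mkHat (k : ℕ) (v : ℕ) (h : v < 2*k+6) : SnakeHat k wL := ⟨v, h⟩

theorem mkHat_val (k v : ℕ) (h : v < 2*k+6) : (mkHat k v h).1 = v := rfl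

theorem mi_of_cover {k : ℕ} (x u : SnakeHat k wL) (hne : ¬ u ≤ x)
    (h : ∀ y : SnakeHat k wL, x ≤ y → y ≠ x → u ≤ y) : MeetIrred x := by
  constructor
  · intro htop
    exact hne (htop u)
  · intro y z hglb
    by_contra hc
    push_neg at hc
    have hxy : x ≤ y := hglb.1 (Set.mem_insert _ _)
    have hxz : x ≤ z := hglb.1 (Set.mem_insert_of_mem _ rfl)
    have huy : u ≤ y := h y hxy (fun h' => hc.1 h'.symm)
    have huz : u ≤ z := h z hxz (fun h' => hc.2 h'.symm)
    refine hne (hglb.2 ?_)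
    rintro v hv
    simp only [Set.mem_insert_iff, Set.mem_singleton_iff] at hv
    rcases hv with rfl | rfl
    · exact huy
    · exact huz

set_option maxHeartbeats 2000000 in
theorem mi_char {k : ℕ} (x : SnakeHat k wL) :
    MeetIrred x ↔ (x.1 = 0 ∨ x.1 = 1 ∨ x.1 = 2 ∨
      (x.1 % 2 = 0 ∧ 4 ≤ x.1 ∧ x.1 ≤ 2*k+2) ∨ x.1 = 2*k+5) := by
  have hx6 := x.2
  constructor
  · intro hmi
    by_contra hshape
    have hsh : x.1 = 2*k+4 ∨ (x.1 % 2 = 1 ∧ 3 ≤ x.1 ∧ x.1 ≤ 2*k+3) := by omega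
    rcases hsh with h4 | ⟨ho, h3, hk3⟩
    · exact hmi.1 (fun y => (le_iff' y x).mpr (Or.inr (Or.inl h4)))
    · obtain ⟨m, hm⟩ : ∃ m, x.1 = 2*m+3 := ⟨(x.1-3)/2, by omega⟩
      have hmk : m ≤ k := by omega
      have hglb : IsGLB {mkHat k (2*m+1) (by omega), mkHat k (2*m+2) (by omega)} x := by
        constructor
        · rintro v hv
          simp only [Set.mem_insert_iff, Set.mem_singleton_iff] at hv
          rcases hv with rfl | rfl
          · refine (le_iff' _ _).mpr ?_
            show hatRel k x.1 (2*m+1)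
            unfold hatRel upRel; omega
          · refine (le_iff' _ _).mpr ?_
            show hatRel k x.1 (2*m+2)
            unfold hatRel upRel; omega
        · intro c hcl
          have h1' := hcl (Set.mem_insert _ _)
          have h2' := hcl (Set.mem_insert_of_mem _ rfl)
          have h1x := (le_iff' _ _).mp h1'
          have h2x := (le_iff' _ _).mp h2'
          have h1 : hatRel k c.1 (2*m+1) := h1x
          have h2 : hatRel k c.1 (2*m+2) := h2x
          have hc6 := c.2
          refine (le_iff' _ _).mpr ?_
          show hatRel k c.1 x.1
          unfold hatRel upRel at h1 h2 ⊢
          omega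
      rcases hmi.2 _ _ hglb with h | h
      · have hx' : x.1 = 2*m+1 := by rw [h, mkHat_val]
        omega
      · have hx' : x.1 = 2*m+2 := by rw [h, mkHat_val]
        omega
  · intro hshape
    have key : ∀ u : ℕ, (hu : u < 2*k+6) → ¬ hatRel k u x.1 →
        (∀ b < 2*k+6, hatRel k x.1 b → b ≠ x.1 → hatRel k u b) → MeetIrred x := by
      intro u hu hne h
      refine mi_of_cover x (mkHat k u hu) ?_ ?_
      · intro hle
        exact hne ((le_iff' _ _).mp hle)
      · intro y hy hne'
        have hy' : hatRel k x.1 y.1 := (le_iff' _ _).mp hy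
        have hyx : y.1 ≠ x.1 := fun hh => hne' (Fin.ext hh)
        exact (le_iff' _ _).mpr (h y.1 y.2 hy' hyx)
    rcases hshape with h0 | h1 | h2 | ⟨he, h4, hk2⟩ | hb
    · refine key (2*k+4) (by omega) ?_ ?_
      · unfold hatRel upRel; omega
      · intro b hb6 hab hne; unfold hatRel upRel at hab ⊢; omega
    · refine key 0 (by omega) ?_ ?_
      · unfold hatRel upRel; omega
      · intro b hb6 hab hne; unfold hatRel upRel at hab ⊢; omega
    · refine key 0 (by omega) ?_ ?_
      · unfold hatRel upRel; omega
      · intro b hb6 hab hne; unfold hatRel upRel at hab ⊢; omega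
    · rcases eq_or_ne x.1 4 with h4' | h4'
      · refine key 1 (by omega) ?_ ?_
        · unfold hatRel upRel; omega
        · intro b hb6 hab hne; unfold hatRel upRel at hab ⊢; omega
      · refine key (x.1 - 2) (by omega) ?_ ?_
        · unfold hatRel upRel; omega
        · intro b hb6 hab hne; unfold hatRel upRel at hab ⊢; omega
    · refine key (2*k+3) (by omega) ?_ ?_
      · unfold hatRel upRel; omega
      · intro b hb6 hab hne; unfold hatRel upRel at hab ⊢; omega

def labv (k v : ℕ) : ℕ :=
  if v = 2*k+5 then 0 else if v = 0 then k+2 else if v = 1 then k+1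
  else if v = 2 then k+3 else k+2 - v/2

def lab {k : ℕ} (q : SnakeQ k wL) : ℕ := labv k q.1.1

def qval (k l : ℕ) : ℕ :=
  if l = 0 then 2*k+5 else if l = k+3 then 2 else if l = k+2 then 0
  else if l = k+1 then 1 else 2*(k+2-l)

theorem qval_lt (k l : ℕ) : qval k l < 2*k+6 := by unfold qval; split_ifs <;> omega

def qq (k l : ℕ) : SnakeQ k wL :=
  ⟨mkHat k (qval k l) (qval_lt k l), (mi_char _).mpr (by
    show qval k l = 0 ∨ qval k l = 1 ∨ qval k l = 2 ∨
      (qval k l % 2 = 0 ∧ 4 ≤ qval k l ∧ qval k l ≤ 2*k+2) ∨ qval k l = 2*k+5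
    unfold qval; split_ifs <;> omega)⟩

theorem lab_qq {k : ℕ} (l : ℕ) (hl : l ≤ k+3) : lab (qq k l) = l := by
  show labv k (qval k l) = l
  unfold labv qval
  split_ifs <;>
    (try exact ‹False›.elim) <;>
    (try simp only [false_or, or_false, false_and, and_false, true_and, and_true, true_or,
      or_true, iff_false, false_iff, iff_true, true_iff, not_false_iff]) <;>
    omega

theorem lab_le {k : ℕ} (q : SnakeQ k wL) : lab q ≤ k+3 := by
  have hq := (mi_char q.1).mp q.2
  have hq6 := q.1.2
  show labv k q.1.1 ≤ k+3
  unfold labv; split_ifs <;> omega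

theorem lab_inj {k : ℕ} (q r : SnakeQ k wL) (h : lab q = lab r) : q = r := by
  have hq := (mi_char q.1).mp q.2
  have hr := (mi_char r.1).mp r.2
  have hq6 := q.1.2
  have hr6 := r.1.2
  have hv : q.1.1 = r.1.1 := by
    have h' : labv k q.1.1 = labv k r.1.1 := h
    unfold labv at h'
    split_ifs at h' <;> omega
  exact Subtype.ext (Fin.ext hv)

theorem qq_lab {k : ℕ} (q : SnakeQ k wL) : qq k (lab q) = q :=
  lab_inj _ _ (by rw [lab_qq _ (lab_le q)])

def QOrd (k l l' : ℕ) : Prop := l = l' ∨ l = 0 ∨ l' = k+2 ∨ (l ≤ l' ∧ l' ≤ k+1)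

set_option maxHeartbeats 2000000 in
theorem Qle_iff {k : ℕ} (q r : SnakeQ k wL) : q ≤ r ↔ QOrd k (lab q) (lab r) := by
  have hq := (mi_char q.1).mp q.2
  have hr := (mi_char r.1).mp r.2
  have hq6 := q.1.2
  have hr6 := r.1.2
  have hle : q ≤ r ↔ hatRel k q.1.1 r.1.1 := by
    rw [← Subtype.coe_le_coe]; exact le_iff' q.1 r.1
  rw [hle]
  show hatRel k q.1.1 r.1.1 ↔ QOrd k (labv k q.1.1) (labv k r.1.1)
  unfold hatRel upRel QOrd labv
  split_ifs <;>
    (try exact ‹False›.elim) <;>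
    (try simp only [false_or, or_false, false_and, and_false, true_and, and_true, true_or,
      or_true, iff_false, false_iff, iff_true, true_iff, not_false_iff]) <;>
    omega

def FmS (k m : ℕ) : Set (SnakeQ k wL) := {x | m ≤ lab x ∧ lab x ≤ k+2}
def GmS (k m : ℕ) : Set (SnakeQ k wL) := {x | (m ≤ lab x ∧ lab x ≤ k+2) ∨ lab x = k+3}

theorem FmS_filter (k m : ℕ) (hm : 1 ≤ m) :
    ∀ a ∈ FmS k m, ∀ b, a ≤ b → b ∈ FmS k m := by
  intro a ha b hab
  rw [Qle_iff] at hab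
  have hbl := lab_le b
  simp only [FmS, Set.mem_setOf_eq] at ha ⊢
  unfold QOrd at hab
  omega

theorem GmS_filter (k m : ℕ) (hm : 1 ≤ m) (hm2 : m ≤ k+2) :
    ∀ a ∈ GmS k m, ∀ b, a ≤ b → b ∈ GmS k m := by
  intro a ha b hab
  rw [Qle_iff] at hab
  have hbl := lab_le b
  simp only [GmS, Set.mem_setOf_eq] at ha ⊢
  unfold QOrd at hab
  omega

noncomputable def vFm (k m : ℕ) : SnakeQ k wL → ℝ := (FmS k m).indicator (fun _ => (1:ℝ))
noncomputable def vGm (k m : ℕ) : SnakeQ k wL → ℝ := (GmS k m).indicator (fun _ => (1:ℝ))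
noncomputable def vFull (k : ℕ) : SnakeQ k wL → ℝ := (Set.univ).indicator (fun _ => (1:ℝ))

theorem ind_inj {α : Type*} {A B : Set α}
    (h : A.indicator (fun _ => (1:ℝ)) = B.indicator (fun _ => (1:ℝ))) : A = B := by
  ext x
  have hx := congrFun h x
  by_cases hA : x ∈ A <;> by_cases hB : x ∈ B
  · exact iff_of_true hA hB
  · rw [Set.indicator_of_mem hA, Set.indicator_of_notMem hB] at hx; norm_num at hx
  · rw [Set.indicator_of_notMem hA, Set.indicator_of_mem hB] at hx; norm_num at hx
  · exact iff_of_false hA hB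

theorem FmS_inj {k m m' : ℕ} (hm : 1 ≤ m) (hm' : 1 ≤ m') (hk : m ≤ k+3) (hk' : m' ≤ k+3)
    (h : FmS k m = FmS k m') : m = m' := by
  have t : ∀ l, 1 ≤ l → l ≤ k+2 → ((m ≤ l ∧ l ≤ k+2) ↔ (m' ≤ l ∧ l ≤ k+2)) := by
    intro l h1 h2
    have hh := Set.ext_iff.mp h (qq k l)
    simpa [FmS, Set.mem_setOf_eq, lab_qq l (by omega : l ≤ k+3)] using hh
  have t1 := t (min m (k+2)) (by omega) (by omega)
  have t2 := t (min m' (k+2)) (by omega) (by omega)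
  omega

theorem GmS_inj {k m m' : ℕ} (hm : 1 ≤ m) (hm' : 1 ≤ m') (hk : m ≤ k+2) (hk' : m' ≤ k+2)
    (h : GmS k m = GmS k m') : m = m' := by
  have t : ∀ l, 1 ≤ l → l ≤ k+2 →
      (((m ≤ l ∧ l ≤ k+2) ∨ l = k+3) ↔ ((m' ≤ l ∧ l ≤ k+2) ∨ l = k+3)) := by
    intro l h1 h2
    have hh := Set.ext_iff.mp h (qq k l)
    simpa [GmS, Set.mem_setOf_eq, lab_qq l (by omega : l ≤ k+3)] using hh
  have t1 := t (min m (k+2)) (by omega) (by omega)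
  have t2 := t (min m' (k+2)) (by omega) (by omega)
  omega

theorem FmS_ne_GmS {k m m' : ℕ} (h : FmS k m = GmS k m') : False := by
  have hh := Set.ext_iff.mp h (qq k (k+3))
  simp [FmS, GmS, Set.mem_setOf_eq, lab_qq (k+3) le_rfl] at hh

theorem univ_ne_FmS {k m : ℕ} (hm : 1 ≤ m) (h : (Set.univ : Set (SnakeQ k wL)) = FmS k m) :
    False := by
  have hh := Set.ext_iff.mp h (qq k 0)
  simp [FmS, Set.mem_setOf_eq, lab_qq 0 (by omega : (0:ℕ) ≤ k+3)] at hh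
  omega

theorem univ_ne_GmS {k m : ℕ} (hm : 1 ≤ m) (h : (Set.univ : Set (SnakeQ k wL)) = GmS k m) :
    False := by
  have hh := Set.ext_iff.mp h (qq k 0)
  simp [GmS, Set.mem_setOf_eq, lab_qq 0 (by omega : (0:ℕ) ≤ k+3)] at hh
  omega

theorem vFm_inj {k m m' : ℕ} (hm : 1 ≤ m) (hm' : 1 ≤ m') (hk : m ≤ k+3) (hk' : m' ≤ k+3)
    (h : vFm k m = vFm k m') : m = m' := FmS_inj hm hm' hk hk' (ind_inj h)

theorem vGm_inj {k m m' : ℕ} (hm : 1 ≤ m) (hm' : 1 ≤ m') (hk : m ≤ k+2) (hk' : m' ≤ k+2)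
    (h : vGm k m = vGm k m') : m = m' := GmS_inj hm hm' hk hk' (ind_inj h)

theorem vFm_ne_vGm {k m m' : ℕ} (h : vFm k m = vGm k m') : False := FmS_ne_GmS (ind_inj h)

theorem vFull_ne_vFm {k m : ℕ} (hm : 1 ≤ m) (h : vFull k = vFm k m) : False :=
  univ_ne_FmS hm (ind_inj h)

theorem vFull_ne_vGm {k m : ℕ} (hm : 1 ≤ m) (h : vFull k = vGm k m) : False :=
  univ_ne_GmS hm (ind_inj h)

theorem vFm_mem {k m : ℕ} (hm : 1 ≤ m) : vFm k m ∈ OPVertexSet (SnakeQ k wL) :=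
  ⟨FmS k m, FmS_filter k m hm, rfl⟩

theorem vGm_mem {k m : ℕ} (hm : 1 ≤ m) (hm2 : m ≤ k+2) :
    vGm k m ∈ OPVertexSet (SnakeQ k wL) :=
  ⟨GmS k m, GmS_filter k m hm hm2, rfl⟩

theorem vFull_mem {k : ℕ} : vFull k ∈ OPVertexSet (SnakeQ k wL) :=
  ⟨Set.univ, fun _ _ b _ => Set.mem_univ b, rfl⟩

theorem vertex_classify {k : ℕ} {v : SnakeQ k wL → ℝ} (hv : v ∈ OPVertexSet (SnakeQ k wL)) :
    v = vFull k ∨ (∃ m, 1 ≤ m ∧ m ≤ k+3 ∧ v = vFm k m) ∨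
      (∃ m, 1 ≤ m ∧ m ≤ k+2 ∧ v = vGm k m) := by
  obtain ⟨A, hA, rfl⟩ := hv
  by_cases hbot : qq k 0 ∈ A
  · left
    have hu : A = Set.univ := by
      ext x
      simp only [Set.mem_univ, iff_true]
      refine hA _ hbot x ?_
      rw [Qle_iff, lab_qq 0 (by omega : (0:ℕ) ≤ k+3)]
      exact Or.inr (Or.inl rfl)
    rw [hu]; rfl
  · have hSne : ({l | 1 ≤ l ∧ l ≤ k+2 ∧ qq k l ∈ A} ∪ {k+3} : Set ℕ).Nonempty :=
      ⟨k+3, Or.inr rfl⟩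
    set M := sInf ({l | 1 ≤ l ∧ l ≤ k+2 ∧ qq k l ∈ A} ∪ {k+3} : Set ℕ) with hMdef
    have hMmem : (1 ≤ M ∧ M ≤ k+2 ∧ qq k M ∈ A) ∨ M = k+3 := Nat.sInf_mem hSne
    have hM1 : 1 ≤ M ∧ M ≤ k+3 := by rcases hMmem with ⟨u1, u2, _⟩ | u; omega; omega
    have key1 : ∀ l, 1 ≤ l → l ≤ k+2 → (qq k l ∈ A ↔ M ≤ l) := by
      intro l h1 h2
      constructor
      · intro hl
        exact Nat.sInf_le (Or.inl ⟨h1, h2, hl⟩)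
      · intro hMl
        rcases hMmem with ⟨u1, u2, u3⟩ | u
        · refine hA _ u3 _ ?_
          rw [Qle_iff, lab_qq M (by omega), lab_qq l (by omega)]
          unfold QOrd; omega
        · omega
    have hE : qq k (k+3) ∈ A → M ≤ k+2 := by
      intro he
      have htop : qq k (k+2) ∈ A := by
        refine hA _ he _ ?_
        rw [Qle_iff, lab_qq (k+3) le_rfl, lab_qq (k+2) (by omega)]
        unfold QOrd; omega
      exact (key1 (k+2) (by omega) le_rfl).mp htop
    by_cases he : qq k (k+3) ∈ A
    · right; right
      refine ⟨M, hM1.1, hE he, ?_⟩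
      have hAeq : A = GmS k M := by
        ext x
        have hx : x = qq k (lab x) := (qq_lab x).symm
        have hxl := lab_le x
        simp only [GmS, Set.mem_setOf_eq]
        rcases Nat.lt_or_ge (lab x) 1 with h0 | h1
        · have hl0 : lab x = 0 := by omega
          constructor
          · intro hxA
            rw [hx, hl0] at hxA
            exact absurd hxA hbot
          · intro hR
            exfalso; omega
        · rcases Nat.lt_or_ge (lab x) (k+3) with h2 | h2
          · have hiff := key1 (lab x) h1 (by omega)
            rw [← hx] at hiff
            rw [hiff]
            omega
          · have hl3 : lab x = k+3 := by omega
            have hxA : x ∈ A := by rw [hx, hl3]; exact he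
            constructor
            · intro _; omega
            · intro _; exact hxA
      rw [hAeq]; rfl
    · right; left
      refine ⟨M, hM1.1, hM1.2, ?_⟩
      have hAeq : A = FmS k M := by
        ext x
        have hx : x = qq k (lab x) := (qq_lab x).symm
        have hxl := lab_le x
        simp only [FmS, Set.mem_setOf_eq]
        rcases Nat.lt_or_ge (lab x) 1 with h0 | h1
        · have hl0 : lab x = 0 := by omega
          constructor
          · intro hxA
            rw [hx, hl0] at hxA
            exact absurd hxA hbot
          · intro hR
            exfalso; omega
        · rcases Nat.lt_or_ge (lab x) (k+3) with h2 | h2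
          · have hiff := key1 (lab x) h1 (by omega)
            rw [← hx] at hiff
            rw [hiff]
            omega
          · have hl3 : lab x = k+3 := by omega
            have hxA : ¬ x ∈ A := by rw [hx, hl3]; exact he
            constructor
            · intro hc; exact absurd hc hxA
            · intro hR; exfalso; omega
      rw [hAeq]; rfl

theorem vFm_apply_qq {k m l : ℕ} (hl : l ≤ k+3) :
    vFm k m (qq k l) = if m ≤ l ∧ l ≤ k+2 then 1 else 0 := by
  unfold vFm
  by_cases h : m ≤ l ∧ l ≤ k+2
  · have hmem : qq k l ∈ FmS k m := by
      simp only [FmS, Set.mem_setOf_eq, lab_qq l hl]; exact h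
    rw [if_pos h, Set.indicator_of_mem hmem]
  · have hmem : qq k l ∉ FmS k m := by
      simp only [FmS, Set.mem_setOf_eq, lab_qq l hl]; exact h
    rw [if_neg h, Set.indicator_of_notMem hmem]

theorem vGm_apply_qq {k m l : ℕ} (hl : l ≤ k+3) :
    vGm k m (qq k l) = if (m ≤ l ∧ l ≤ k+2) ∨ l = k+3 then 1 else 0 := by
  unfold vGm
  by_cases h : (m ≤ l ∧ l ≤ k+2) ∨ l = k+3
  · have hmem : qq k l ∈ GmS k m := by
      simp only [GmS, Set.mem_setOf_eq, lab_qq l hl]; exact h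
    rw [if_pos h, Set.indicator_of_mem hmem]
  · have hmem : qq k l ∉ GmS k m := by
      simp only [GmS, Set.mem_setOf_eq, lab_qq l hl]; exact h
    rw [if_neg h, Set.indicator_of_notMem hmem]

theorem vFull_apply {k : ℕ} (q : SnakeQ k wL) : vFull k q = 1 :=
  Set.indicator_of_mem (Set.mem_univ q) _

set_option maxHeartbeats 1000000 in
theorem indep_of_few_pairs {k : ℕ} (Z : Set (SnakeQ k wL → ℝ))
    (hZ : Z ⊆ OPVertexSet (SnakeQ k wL))
    (hp : ∀ m m', 1 ≤ m → m ≤ k+2 → 1 ≤ m' → m' ≤ k+2 →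
      vFm k m ∈ Z → vGm k m ∈ Z → vFm k m' ∈ Z → vGm k m' ∈ Z → m = m') :
    AffineIndependent ℝ (Subtype.val : Z → SnakeQ k wL → ℝ) := by
  classical
  rw [affineIndependent_iff]
  intro s w hw hvsub i hi
  set ω : (SnakeQ k wL → ℝ) → ℝ :=
    fun v => ∑ j ∈ s.filter (fun j => j.1 = v), w j with hω
  set VF : Finset (SnakeQ k wL → ℝ) := (Finset.Icc 1 (k+3)).image (vFm k) with hVF
  set VG : Finset (SnakeQ k wL → ℝ) := (Finset.Icc 1 (k+2)).image (vGm k) with hVG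
  set Vfin : Finset (SnakeQ k wL → ℝ) := insert (vFull k) (VF ∪ VG) with hVfin
  have hmaps : ∀ j ∈ s, j.1 ∈ Vfin := by
    intro j _
    rcases vertex_classify (hZ j.2) with h | ⟨m, h1, h2, h⟩ | ⟨m, h1, h2, h⟩
    · rw [h]; exact Finset.mem_insert_self _ _
    · rw [h]
      exact Finset.mem_insert_of_mem (Finset.mem_union_left _
        (Finset.mem_image_of_mem _ (Finset.mem_Icc.mpr ⟨h1, h2⟩)))
    · rw [h]
      exact Finset.mem_insert_of_mem (Finset.mem_union_right _
        (Finset.mem_image_of_mem _ (Finset.mem_Icc.mpr ⟨h1, h2⟩)))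
  have key : ∀ F : (SnakeQ k wL → ℝ) → ℝ,
      ∑ v ∈ Vfin, ω v * F v = ∑ j ∈ s, w j * F j.1 := by
    intro F
    calc ∑ v ∈ Vfin, ω v * F v
        = ∑ v ∈ Vfin, ∑ j ∈ s.filter (fun j => j.1 = v),
            w j * F j.1 := by
          refine Finset.sum_congr rfl fun v _ => ?_
          rw [hω]
          rw [Finset.sum_mul]
          refine Finset.sum_congr rfl fun j hj => ?_
          rw [(Finset.mem_filter.mp hj).2]
      _ = ∑ j ∈ s, w j * F (j : SnakeQ k wL → ℝ) :=
          Finset.sum_fiberwise_of_maps_to hmaps _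
  have sum0 : ∑ v ∈ Vfin, ω v = 0 := by
    have h1 := key (fun _ => 1)
    simp only [mul_one] at h1
    rw [h1, hw]
  have coord : ∀ q : SnakeQ k wL, ∑ v ∈ Vfin, ω v * v q = 0 := by
    intro q
    have h1 := key (fun v => v q)
    have h2 : ∑ j ∈ s, w j * j.1 q = 0 := by
      have h3 := congrFun hvsub q
      simpa using h3
    rw [h1, h2]
  have hnotmem : vFull k ∉ VF ∪ VG := by
    intro hmem
    rcases Finset.mem_union.mp hmem with hm | hm <;>
      obtain ⟨m, hm1, hm2⟩ := Finset.mem_image.mp hm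
    · exact vFull_ne_vFm (Finset.mem_Icc.mp hm1).1 hm2.symm
    · exact vFull_ne_vGm (Finset.mem_Icc.mp hm1).1 hm2.symm
  have hdisj : Disjoint VF VG := by
    rw [Finset.disjoint_left]
    intro v hv1 hv2
    obtain ⟨m, _, rfl⟩ := Finset.mem_image.mp hv1
    obtain ⟨m', _, he⟩ := Finset.mem_image.mp hv2
    exact vFm_ne_vGm he.symm
  have expand : ∀ g : (SnakeQ k wL → ℝ) → ℝ, ∑ v ∈ Vfin, g v =
      g (vFull k) + ((∑ m ∈ Finset.Icc 1 (k+3), g (vFm k m)) +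
        ∑ m ∈ Finset.Icc 1 (k+2), g (vGm k m)) := by
    intro g
    rw [hVfin, Finset.sum_insert hnotmem, Finset.sum_union hdisj, hVF, hVG,
      Finset.sum_image (fun a ha b hb hab => vFm_inj (Finset.mem_Icc.mp ha).1
        (Finset.mem_Icc.mp hb).1 (Finset.mem_Icc.mp ha).2 (Finset.mem_Icc.mp hb).2 hab),
      Finset.sum_image (fun a ha b hb hab => vGm_inj (Finset.mem_Icc.mp ha).1
        (Finset.mem_Icc.mp hb).1 (Finset.mem_Icc.mp ha).2 (Finset.mem_Icc.mp hb).2 hab)]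
  have El : ∀ l, l ≤ k+3 →
      ω (vFull k) + ((∑ m ∈ Finset.Icc 1 (k+3),
          ω (vFm k m) * (if m ≤ l ∧ l ≤ k+2 then (1:ℝ) else 0)) +
        ∑ m ∈ Finset.Icc 1 (k+2),
          ω (vGm k m) * (if (m ≤ l ∧ l ≤ k+2) ∨ l = k+3 then (1:ℝ) else 0)) = 0 := by
    intro l hl
    have h := coord (qq k l)
    rw [expand (fun v => ω v * v (qq k l))] at h
    simp only [vFull_apply, mul_one, vFm_apply_qq hl, vGm_apply_qq hl] at h
    exact h
  have eq0 : ω (vFull k) = 0 := by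
    have h := El 0 (by omega)
    rw [Finset.sum_eq_zero (fun m hm => by
        rw [if_neg (by have := (Finset.mem_Icc.mp hm).1; omega), mul_zero]),
      Finset.sum_eq_zero (fun m hm => by
        rw [if_neg (by have := (Finset.mem_Icc.mp hm).1; omega), mul_zero])] at h
    simpa using h
  have eqChain : ∀ l, 1 ≤ l → l ≤ k+2 →
      (∑ m ∈ Finset.Icc 1 l, ω (vFm k m)) + (∑ m ∈ Finset.Icc 1 l, ω (vGm k m)) = 0 := by
    intro l h1 h2
    have h := El l (by omega)
    rw [eq0, zero_add] at h
    have hF : ∑ m ∈ Finset.Icc 1 (k+3),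
        ω (vFm k m) * (if m ≤ l ∧ l ≤ k+2 then (1:ℝ) else 0) =
        ∑ m ∈ Finset.Icc 1 l, ω (vFm k m) := by
      simp only [mul_ite, mul_one, mul_zero]
      rw [← Finset.sum_filter]
      refine Finset.sum_congr ?_ (fun _ _ => rfl)
      ext t
      simp only [Finset.mem_filter, Finset.mem_Icc]
      omega
    have hG : ∑ m ∈ Finset.Icc 1 (k+2),
        ω (vGm k m) * (if (m ≤ l ∧ l ≤ k+2) ∨ l = k+3 then (1:ℝ) else 0) =
        ∑ m ∈ Finset.Icc 1 l, ω (vGm k m) := by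
      simp only [mul_ite, mul_one, mul_zero]
      rw [← Finset.sum_filter]
      refine Finset.sum_congr ?_ (fun _ _ => rfl)
      ext t
      simp only [Finset.mem_filter, Finset.mem_Icc]
      omega
    rw [hF, hG] at h
    exact h
  have eqE : ∑ m ∈ Finset.Icc 1 (k+2), ω (vGm k m) = 0 := by
    have h := El (k+3) le_rfl
    rw [eq0, zero_add] at h
    rw [Finset.sum_eq_zero (fun m hm => by rw [if_neg (by omega), mul_zero]),
      Finset.sum_congr rfl (fun m hm => by rw [if_pos (Or.inr rfl), mul_one])] at h
    simpa using h
  have eqTot : ω (vFull k) + ((∑ m ∈ Finset.Icc 1 (k+3), ω (vFm k m)) +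
      (∑ m ∈ Finset.Icc 1 (k+2), ω (vGm k m))) = 0 := by
    have h := sum0
    rw [expand ω] at h
    exact h
  have pair0 : ∀ l, 1 ≤ l → l ≤ k+2 → ω (vFm k l) + ω (vGm k l) = 0 := by
    intro l h1 h2
    rcases eq_or_ne l 1 with rfl | hne
    · have h := eqChain 1 le_rfl h2
      simpa using h
    · have hA := eqChain l h1 h2
      have hB := eqChain (l-1) (by omega) (by omega)
      have hIcc : Finset.Icc 1 l = insert l (Finset.Icc 1 (l-1)) := by
        ext t
        simp only [Finset.mem_Icc, Finset.mem_insert]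
        omega
      rw [hIcc, Finset.sum_insert (by simp only [Finset.mem_Icc]; omega),
        Finset.sum_insert (by simp only [Finset.mem_Icc]; omega)] at hA
      linarith
  have aTop : ω (vFm k (k+3)) = 0 := by
    have hIcc : Finset.Icc 1 (k+3) = insert (k+3) (Finset.Icc 1 (k+2)) := by
      ext t
      simp only [Finset.mem_Icc, Finset.mem_insert]
      omega
    have h := eqTot
    rw [eq0, zero_add, hIcc, Finset.sum_insert (by simp only [Finset.mem_Icc]; omega)] at h
    have h2 := eqChain (k+2) (by omega) le_rfl
    linarith
  have hωnotin : ∀ v, v ∉ Z → ω v = 0 := by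
    intro v hv
    show (∑ j ∈ s.filter (fun j => j.1 = v), w j) = 0
    refine Finset.sum_eq_zero fun j hj => ?_
    exact absurd ((Finset.mem_filter.mp hj).2 ▸ j.2) hv
  have hbz : ∀ l, 1 ≤ l → l ≤ k+2 → ω (vGm k l) = 0 := by
    by_cases hex : ∃ m0, 1 ≤ m0 ∧ m0 ≤ k+2 ∧ vFm k m0 ∈ Z ∧ vGm k m0 ∈ Z
    · obtain ⟨m0, u1, u2, uF, uG⟩ := hex
      have hrest : ∀ l, 1 ≤ l → l ≤ k+2 → l ≠ m0 → ω (vGm k l) = 0 := by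
        intro l h1 h2 h3
        have hnp : ¬(vFm k l ∈ Z ∧ vGm k l ∈ Z) :=
          fun hc => h3 (hp l m0 h1 h2 u1 u2 hc.1 hc.2 uF uG)
        have hs := pair0 l h1 h2
        rcases not_and_or.mp hnp with hc | hc
        · have := hωnotin _ hc; linarith
        · exact hωnotin _ hc
      have hm0 : ω (vGm k m0) = 0 := by
        have h := eqE
        rw [Finset.sum_eq_single m0
          (fun l hl hne => hrest l (Finset.mem_Icc.mp hl).1 (Finset.mem_Icc.mp hl).2 hne)
          (fun hm => absurd (Finset.mem_Icc.mpr ⟨u1, u2⟩) hm)] at h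
        exact h
      intro l h1 h2
      rcases eq_or_ne l m0 with rfl | hne
      · exact hm0
      · exact hrest l h1 h2 hne
    · intro l h1 h2
      by_cases hG : vGm k l ∈ Z
      · by_cases hF : vFm k l ∈ Z
        · exact absurd ⟨l, h1, h2, hF, hG⟩ hex
        · have hs := pair0 l h1 h2
          have := hωnotin _ hF
          linarith
      · exact hωnotin _ hG
  have haz : ∀ l, 1 ≤ l → l ≤ k+2 → ω (vFm k l) = 0 := by
    intro l h1 h2
    have hs := pair0 l h1 h2
    have := hbz l h1 h2
    linarith
  have hωi : ω i.1 = w i := by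
    show (∑ j ∈ s.filter (fun j => j.1 = i.1), w j) = w i
    exact Finset.sum_eq_single_of_mem i (Finset.mem_filter.mpr ⟨hi, rfl⟩)
      (fun j hj hne => absurd (Subtype.ext ((Finset.mem_filter.mp hj).2)) hne)
  rcases vertex_classify (hZ i.2) with h | ⟨m, h1, h2, h⟩ | ⟨m, h1, h2, h⟩
  · rw [← hωi, h]; exact eq0
  · rw [← hωi, h]
    rcases eq_or_ne m (k+3) with rfl | hne
    · exact aTop
    · exact haz m h1 (by omega)
  · rw [← hωi, h]
    exact hbz m h1 h2

def ZP (k m m' : ℕ) : Set (SnakeQ k wL → ℝ) := {vFm k m, vGm k m, vFm k m', vGm k m'}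

theorem ZP_subset_V {k m m' : ℕ} (m1 : 1 ≤ m) (m2 : m ≤ k+2) (m1' : 1 ≤ m') (m2' : m' ≤ k+2) :
    ZP k m m' ⊆ OPVertexSet (SnakeQ k wL) := by
  rintro v (rfl | rfl | rfl | rfl)
  · exact vFm_mem m1
  · exact vGm_mem m1 m2
  · exact vFm_mem m1'
  · exact vGm_mem m1' m2'

theorem vGm_sub {k m : ℕ} :
    vGm k m = vFm k m + ({x : SnakeQ k wL | lab x = k+3}).indicator (fun _ => (1:ℝ)) := by
  funext q
  simp only [Pi.add_apply]
  unfold vGm vFm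
  by_cases h3 : lab q = k+3
  · rw [Set.indicator_of_mem (show q ∈ GmS k m from Or.inr h3),
      Set.indicator_of_notMem (show q ∉ FmS k m from fun hc => by
        have := hc.2; omega),
      Set.indicator_of_mem (show q ∈ {x : SnakeQ k wL | lab x = k+3} from h3)]
    norm_num
  · by_cases hc : m ≤ lab q ∧ lab q ≤ k+2
    · rw [Set.indicator_of_mem (show q ∈ GmS k m from Or.inl hc),
        Set.indicator_of_mem (show q ∈ FmS k m from hc),
        Set.indicator_of_notMem (show q ∉ {x : SnakeQ k wL | lab x = k+3} from h3)]
      norm_num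
    · rw [Set.indicator_of_notMem (show q ∉ GmS k m from fun hcc => by
          rcases hcc with h | h
          · exact hc h
          · exact h3 h),
        Set.indicator_of_notMem (show q ∉ FmS k m from hc),
        Set.indicator_of_notMem (show q ∉ {x : SnakeQ k wL | lab x = k+3} from h3)]
      norm_num

theorem ZP_dep {k m m' : ℕ} (m1 : 1 ≤ m) (m2 : m ≤ k+2) (m1' : 1 ≤ m') (m2' : m' ≤ k+2)
    (hne : m ≠ m') :
    ¬ AffineIndependent ℝ (Subtype.val : (ZP k m m') → SnakeQ k wL → ℝ) := by
  classical
  intro hind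
  rw [affineIndependent_iff] at hind
  have d12 : vFm k m ≠ vGm k m := fun h => vFm_ne_vGm h
  have d13 : vFm k m ≠ vFm k m' := fun h => hne (vFm_inj m1 m1' (by omega) (by omega) h)
  have d14 : vFm k m ≠ vGm k m' := fun h => vFm_ne_vGm h
  have d23 : vGm k m ≠ vFm k m' := fun h => vFm_ne_vGm h.symm
  have d24 : vGm k m ≠ vGm k m' := fun h => hne (vGm_inj m1 m1' m2 m2' h)
  have d34 : vFm k m' ≠ vGm k m' := fun h => vFm_ne_vGm h
  set i1 : ↥(ZP k m m') := ⟨vFm k m, Or.inl rfl⟩ with hi1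
  set i2 : ↥(ZP k m m') := ⟨vGm k m, Or.inr (Or.inl rfl)⟩ with hi2
  set i3 : ↥(ZP k m m') := ⟨vFm k m', Or.inr (Or.inr (Or.inl rfl))⟩ with hi3
  set i4 : ↥(ZP k m m') := ⟨vGm k m', Or.inr (Or.inr (Or.inr rfl))⟩ with hi4
  have ne12 : i1 ≠ i2 := fun h => d12 (congrArg Subtype.val h)
  have ne13 : i1 ≠ i3 := fun h => d13 (congrArg Subtype.val h)
  have ne14 : i1 ≠ i4 := fun h => d14 (congrArg Subtype.val h)
  have ne23 : i2 ≠ i3 := fun h => d23 (congrArg Subtype.val h)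
  have ne24 : i2 ≠ i4 := fun h => d24 (congrArg Subtype.val h)
  have ne34 : i3 ≠ i4 := fun h => d34 (congrArg Subtype.val h)
  set s : Finset ↥(ZP k m m') := {i1, i2, i3, i4} with hs
  set w : ↥(ZP k m m') → ℝ := fun j => if j = i1 then 1 else if j = i2 then -1
    else if j = i3 then -1 else 1 with hwdef
  have hmem2 : i1 ∉ ({i2, i3, i4} : Finset ↥(ZP k m m')) := by
    simp only [Finset.mem_insert, Finset.mem_singleton]
    push_neg
    exact ⟨ne12, ne13, ne14⟩
  have hmem3 : i2 ∉ ({i3, i4} : Finset ↥(ZP k m m')) := by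
    simp only [Finset.mem_insert, Finset.mem_singleton]
    push_neg
    exact ⟨ne23, ne24⟩
  have hmem4 : i3 ∉ ({i4} : Finset ↥(ZP k m m')) := by
    simp only [Finset.mem_singleton]
    exact ne34
  have hsum : ∀ f : ↥(ZP k m m') → (SnakeQ k wL → ℝ),
      ∑ j ∈ s, f j = f i1 + (f i2 + (f i3 + f i4)) := by
    intro f
    rw [hs, Finset.sum_insert hmem2, Finset.sum_insert hmem3, Finset.sum_insert hmem4,
      Finset.sum_singleton]
  have hsumr : ∀ f : ↥(ZP k m m') → ℝ,
      ∑ j ∈ s, f j = f i1 + (f i2 + (f i3 + f i4)) := by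
    intro f
    rw [hs, Finset.sum_insert hmem2, Finset.sum_insert hmem3, Finset.sum_insert hmem4,
      Finset.sum_singleton]
  have hw1 : w i1 = 1 := by rw [hwdef]; simp
  have hw2 : w i2 = -1 := by rw [hwdef]; simp [ne12.symm]
  have hw3 : w i3 = -1 := by rw [hwdef]; simp [ne13.symm, ne23.symm]
  have hw4 : w i4 = 1 := by rw [hwdef]; simp [ne14.symm, ne24.symm, ne34.symm]
  have hw0 : ∑ j ∈ s, w j = 0 := by
    rw [hsumr w, hw1, hw2, hw3, hw4]; norm_num
  have hv0 : ∑ j ∈ s, w j • (j : SnakeQ k wL → ℝ) = 0 := by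
    rw [hsum (fun j => w j • (j : SnakeQ k wL → ℝ))]
    simp only [hw1, hw2, hw3, hw4]
    show (1:ℝ) • vFm k m + ((-1:ℝ) • vGm k m + ((-1:ℝ) • vFm k m' + (1:ℝ) • vGm k m')) = 0
    rw [vGm_sub (k := k) (m := m), vGm_sub (k := k) (m := m')]
    simp only [one_smul, neg_one_smul]
    abel
  have := hind s w hw0 hv0 i1 (by rw [hs]; exact Finset.mem_insert_self _ _)
  rw [hw1] at this
  norm_num at this

theorem mem_ZP_F {k t m m' : ℕ} (t1 : 1 ≤ t) (tk : t ≤ k+3) (m1 : 1 ≤ m) (mk : m ≤ k+3)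
    (m1' : 1 ≤ m') (mk' : m' ≤ k+3) (ht : vFm k t ∈ ZP k m m') : t = m ∨ t = m' := by
  rcases ht with h | h | h | h
  · exact Or.inl (vFm_inj t1 m1 tk mk h)
  · exact (vFm_ne_vGm h).elim
  · exact Or.inr (vFm_inj t1 m1' tk mk' h)
  · exact (vFm_ne_vGm h).elim

theorem mem_ZP_G {k t m m' : ℕ} (t1 : 1 ≤ t) (tk : t ≤ k+2) (m1 : 1 ≤ m) (mk : m ≤ k+2)
    (m1' : 1 ≤ m') (mk' : m' ≤ k+2) (ht : vGm k t ∈ ZP k m m') : t = m ∨ t = m' := by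
  rcases ht with h | h | h | h
  · exact (vFm_ne_vGm h.symm).elim
  · exact Or.inl (vGm_inj t1 m1 tk mk h)
  · exact (vFm_ne_vGm h.symm).elim
  · exact Or.inr (vGm_inj t1 m1' tk mk' h)

theorem ZP_circuit {k m m' : ℕ} (m1 : 1 ≤ m) (m2 : m ≤ k+2) (m1' : 1 ≤ m') (m2' : m' ≤ k+2)
    (hne : m ≠ m') : IsAffCircuit (ZP k m m') := by
  constructor
  · exact ZP_dep m1 m2 m1' m2' hne
  · intro Y hY
    obtain ⟨hYsub, hYne⟩ := Set.ssubset_iff_subset_ne.mp hY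
    refine indep_of_few_pairs Y (fun v hv => ZP_subset_V m1 m2 m1' m2' (hYsub hv)) ?_
    intro l l' e1 e2 e3 e4 hFl hGl hFl' hGl'
    by_contra hne'
    have hl := mem_ZP_F e1 (by omega) m1 (by omega) m1' (by omega) (hYsub hFl)
    have hl' := mem_ZP_F e3 (by omega) m1 (by omega) m1' (by omega) (hYsub hFl')
    have hsub : ZP k m m' ⊆ Y := by
      rintro v (rfl | rfl | rfl | rfl)
      · rcases hl with rfl | rfl
        · exact hFl
        · rcases hl' with rfl | rfl
          · exact hFl'
          · exact absurd rfl hne'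
      · rcases hl with rfl | rfl
        · exact hGl
        · rcases hl' with rfl | rfl
          · exact hGl'
          · exact absurd rfl hne'
      · rcases hl' with rfl | rfl
        · rcases hl with rfl | rfl
          · exact absurd rfl hne'
          · exact hFl
        · rcases hl with rfl | rfl
          · exact hFl'
          · exact absurd rfl hne'
      · rcases hl' with rfl | rfl
        · rcases hl with rfl | rfl
          · exact absurd rfl hne'
          · exact hGl
        · rcases hl with rfl | rfl
          · exact hGl'
          · exact absurd rfl hne'
    exact hYne (Set.Subset.antisymm hYsub hsub)

theorem dep_pairs {k : ℕ} (Z : Set (SnakeQ k wL → ℝ)) (hZ : Z ⊆ OPVertexSet (SnakeQ k wL))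
    (hdep : ¬ AffineIndependent ℝ (Subtype.val : Z → SnakeQ k wL → ℝ)) :
    ∃ m m', 1 ≤ m ∧ m ≤ k+2 ∧ 1 ≤ m' ∧ m' ≤ k+2 ∧ m < m' ∧ ZP k m m' ⊆ Z := by
  by_contra hc
  apply hdep
  apply indep_of_few_pairs Z hZ
  intro m m' e1 e2 e3 e4 hF hG hF' hG'
  by_contra hne
  rcases Nat.lt_or_ge m m' with hlt | hge
  · exact hc ⟨m, m', e1, e2, e3, e4, hlt, by rintro v (rfl | rfl | rfl | rfl) <;> assumption⟩
  · have hlt : m' < m := by omega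
    exact hc ⟨m', m, e3, e4, e1, e2, hlt, by rintro v (rfl | rfl | rfl | rfl) <;> assumption⟩

theorem circuit_eq {k : ℕ} (Z : Set (SnakeQ k wL → ℝ)) (hZ : Z ⊆ OPVertexSet (SnakeQ k wL))
    (hcir : IsAffCircuit Z) :
    ∃ m m', 1 ≤ m ∧ m ≤ k+2 ∧ 1 ≤ m' ∧ m' ≤ k+2 ∧ m < m' ∧ Z = ZP k m m' := by
  obtain ⟨m, m', e1, e2, e3, e4, hlt, hsub⟩ := dep_pairs Z hZ hcir.1
  refine ⟨m, m', e1, e2, e3, e4, hlt, ?_⟩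
  by_contra hne
  have hss : ZP k m m' ⊂ Z :=
    HasSubset.Subset.ssubset_of_ne hsub (fun h => hne h.symm)
  exact ZP_dep e1 e2 e3 e4 (by omega) (hcir.2 _ hss)

theorem ZP_ncard {k m m' : ℕ} (m1 : 1 ≤ m) (m2 : m ≤ k+2) (m1' : 1 ≤ m') (m2' : m' ≤ k+2)
    (hne : m ≠ m') : (ZP k m m').ncard = 4 := by
  have d12 : vFm k m ≠ vGm k m := fun h => vFm_ne_vGm h
  have d13 : vFm k m ≠ vFm k m' := fun h => hne (vFm_inj m1 m1' (by omega) (by omega) h)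
  have d14 : vFm k m ≠ vGm k m' := fun h => vFm_ne_vGm h
  have d23 : vGm k m ≠ vFm k m' := fun h => vFm_ne_vGm h.symm
  have d24 : vGm k m ≠ vGm k m' := fun h => hne (vGm_inj m1 m1' m2 m2' h)
  have d34 : vFm k m' ≠ vGm k m' := fun h => vFm_ne_vGm h
  show ({vFm k m, vGm k m, vFm k m', vGm k m'} : Set (SnakeQ k wL → ℝ)).ncard = 4
  rw [Set.ncard_insert_of_notMem (by
      rintro (h | h | h)
      · exact d12 h
      · exact d13 h
      · exact d14 h),
    Set.ncard_insert_of_notMem (by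
      rintro (h | h)
      · exact d23 h
      · exact d24 h),
    Set.ncard_insert_of_notMem (by
      rintro h
      exact d34 h),
    Set.ncard_singleton]

theorem pairs_card : ∀ K : ℕ,
    ((Finset.Icc 1 K ×ˢ Finset.Icc 1 K).filter fun p : ℕ×ℕ => p.1 < p.2).card = K.choose 2 := by
  intro K
  induction K with
  | zero =>
    rw [show Finset.Icc 1 0 = (∅ : Finset ℕ) from rfl]
    simp
  | succ K ih =>
    have hsplit : ((Finset.Icc 1 (K+1) ×ˢ Finset.Icc 1 (K+1)).filter fun p : ℕ×ℕ => p.1 < p.2)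
        = ((Finset.Icc 1 K ×ˢ Finset.Icc 1 K).filter fun p : ℕ×ℕ => p.1 < p.2)
          ∪ (Finset.Icc 1 K).image (fun x => (x, K+1)) := by
      ext ⟨x, y⟩
      simp only [Finset.mem_filter, Finset.mem_product, Finset.mem_Icc, Finset.mem_union,
        Finset.mem_image, Prod.mk.injEq]
      constructor
      · rintro ⟨⟨⟨hx1, hx2⟩, hy1, hy2⟩, hxy⟩
        rcases eq_or_ne y (K+1) with rfl | hy
        · exact Or.inr ⟨x, ⟨hx1, by omega⟩, rfl, rfl⟩
        · exact Or.inl ⟨⟨⟨hx1, by omega⟩, hy1, by omega⟩, hxy⟩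
      · rintro (⟨⟨⟨hx1, hx2⟩, hy1, hy2⟩, hxy⟩ | ⟨a, ⟨ha1, ha2⟩, rfl, rfl⟩)
        · exact ⟨⟨⟨hx1, by omega⟩, hy1, by omega⟩, hxy⟩
        · exact ⟨⟨⟨ha1, by omega⟩, by omega, le_rfl⟩, by omega⟩
    have hdisj : Disjoint ((Finset.Icc 1 K ×ˢ Finset.Icc 1 K).filter fun p : ℕ×ℕ => p.1 < p.2)
        ((Finset.Icc 1 K).image (fun x => (x, K+1))) := by
      rw [Finset.disjoint_left]
      rintro ⟨x, y⟩ h1 h2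
      simp only [Finset.mem_filter, Finset.mem_product, Finset.mem_Icc] at h1
      simp only [Finset.mem_image, Prod.mk.injEq] at h2
      obtain ⟨a, _, _, hy⟩ := h2
      omega
    rw [hsplit, Finset.card_union_of_disjoint hdisj,
      Finset.card_image_of_injective _ (fun a b h => (Prod.ext_iff.mp h).1), ih, Nat.card_Icc]
    have h1 : (K+1).choose 2 = K.choose 1 + K.choose 2 := Nat.choose_succ_succ K 1
    have h2 := Nat.choose_one_right K
    omega

end Stmt16Aux

open Stmt16Aux in
theorem stmt16 (n : ℕ) (hn : 1 ≤ n) :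
    (∀ Z : Set (SnakeQ (n - 1) (fun _ => Letter.L) → ℝ),
      Z ⊆ OPVertexSet (SnakeQ (n - 1) (fun _ => Letter.L)) → IsAffCircuit Z →
        Z.ncard = 4) ∧
    {Z : Set (SnakeQ (n - 1) (fun _ => Letter.L) → ℝ) |
        Z ⊆ OPVertexSet (SnakeQ (n - 1) (fun _ => Letter.L)) ∧ IsAffCircuit Z}.ncard =
      (n + 1).choose 2 := by
  obtain ⟨k, rfl⟩ : ∃ k, n = k + 1 := ⟨n-1, by omega⟩
  show (∀ Z : Set (SnakeQ k wL → ℝ),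
      Z ⊆ OPVertexSet (SnakeQ k wL) → IsAffCircuit Z → Z.ncard = 4) ∧
    {Z : Set (SnakeQ k wL → ℝ) |
      Z ⊆ OPVertexSet (SnakeQ k wL) ∧ IsAffCircuit Z}.ncard = (k+1+1).choose 2
  constructor
  · intro Z hZ hcir
    obtain ⟨m, m', e1, e2, e3, e4, hlt, rfl⟩ := circuit_eq Z hZ hcir
    exact ZP_ncard e1 e2 e3 e4 (by omega)
  · have himg : {Z : Set (SnakeQ k wL → ℝ) |
        Z ⊆ OPVertexSet (SnakeQ k wL) ∧ IsAffCircuit Z}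
        = (fun p : ℕ×ℕ => ZP k p.1 p.2) '' {p : ℕ×ℕ | 1 ≤ p.1 ∧ p.1 < p.2 ∧ p.2 ≤ k+2} := by
      ext Z
      simp only [Set.mem_setOf_eq, Set.mem_image]
      constructor
      · rintro ⟨hZ, hcir⟩
        obtain ⟨m, m', e1, e2, e3, e4, hlt, rfl⟩ := circuit_eq Z hZ hcir
        exact ⟨(m, m'), ⟨e1, hlt, e4⟩, rfl⟩
      · rintro ⟨⟨m, m'⟩, ⟨h1, hlt, h2⟩, rfl⟩
        exact ⟨ZP_subset_V h1 (by omega) (by omega) h2,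
          ZP_circuit h1 (by omega) (by omega) h2 (by omega)⟩
    rw [himg, Set.ncard_image_of_injOn (by
      rintro ⟨a, b⟩ ⟨ha1, hab, hb2⟩ ⟨c, d⟩ ⟨hc1, hcd, hd2⟩ h
      simp only at h ha1 hab hb2 hc1 hcd hd2
      have hma : vFm k a ∈ ZP k a b := Or.inl rfl
      have hmb : vFm k b ∈ ZP k a b := Or.inr (Or.inr (Or.inl rfl))
      rw [h] at hma hmb
      have h1 : a = c ∨ a = d :=
        mem_ZP_F ha1 (by omega) hc1 (by omega) (by omega) (by omega) hma
      have h2 : b = c ∨ b = d :=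
        mem_ZP_F (by omega) (by omega) hc1 (by omega) (by omega) (by omega) hmb
      have hac : a = c ∧ b = d := by omega
      rw [Prod.mk.injEq]
      exact hac)]
    have hset : {p : ℕ×ℕ | 1 ≤ p.1 ∧ p.1 < p.2 ∧ p.2 ≤ k+2}
        = ↑((Finset.Icc 1 (k+2) ×ˢ Finset.Icc 1 (k+2)).filter fun p : ℕ×ℕ => p.1 < p.2) := by
      ext ⟨x, y⟩
      simp only [Set.mem_setOf_eq, Finset.coe_filter, Finset.mem_product, Finset.mem_Icc,
        Finset.mem_coe, Finset.mem_filter]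
      omega
    rw [hset, Set.ncard_coe_finset, pairs_card]
end
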